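/- arXiv:2209.14718 — 4 statements merged into one kernel-verified Lean document; each statement's English description precedes it below -/
import Mathlib

section
/- Let H and A be Hopf quasigroups over a field F and let Ψ : H⊗A → A⊗H be an a-comonoidal distributive law of H over A. Then the wreath product A⊗_Ψ H, i.e. the vector space A⊗H with unit η_A⊗η_H, product (μ_A⊗μ_H)∘(A⊗Ψ⊗H), counit ε_A⊗ε_H, coproduct δ_{A⊗H} = (A⊗c_{A,H}⊗H)∘(δ_A⊗δ_H) and antipode Ψ∘(λ_H⊗λ_A)∘c_{A,H}, is a Hopf quasigroup. -/
open TensorProduct LinearMap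

noncomputable section

universe u

/-- A Hopf quasigroup structure on an `F`-module `H`. -/
structure HopfQG (F : Type u) [Field F] (H : Type u) [AddCommGroup H] [Module F H] where
  eta : F →ₗ[F] H
  mu : H ⊗[F] H →ₗ[F] H
  eps : H →ₗ[F] F
  delta : H →ₗ[F] H ⊗[F] H
  lam : H →ₗ[F] H
  mul_one : mu ∘ₗ lTensor H eta ∘ₗ (TensorProduct.rid F H).symm.toLinearMap = LinearMap.id
  one_mul : mu ∘ₗ rTensor H eta ∘ₗ (TensorProduct.lid F H).symm.toLinearMap = LinearMap.id
  counit_left : (TensorProduct.lid F H).toLinearMap ∘ₗ rTensor H eps ∘ₗ delta = LinearMap.id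
  counit_right : (TensorProduct.rid F H).toLinearMap ∘ₗ lTensor H eps ∘ₗ delta = LinearMap.id
  coassoc : (TensorProduct.assoc F H H H).toLinearMap ∘ₗ rTensor H delta ∘ₗ delta
      = lTensor H delta ∘ₗ delta
  eps_eta : eps ∘ₗ eta = LinearMap.id
  eps_mu : eps ∘ₗ mu = (TensorProduct.lid F F).toLinearMap ∘ₗ TensorProduct.map eps eps
  delta_eta : delta ∘ₗ eta
      = TensorProduct.map eta eta ∘ₗ (TensorProduct.lid F F).symm.toLinearMap
  delta_mu : delta ∘ₗ mu
      = TensorProduct.map mu mu ∘ₗ (TensorProduct.tensorTensorTensorComm F H H H H).toLinearMap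
          ∘ₗ TensorProduct.map delta delta
  antipode_l1 : mu ∘ₗ TensorProduct.map lam mu ∘ₗ (TensorProduct.assoc F H H H).toLinearMap
        ∘ₗ rTensor H delta
      = (TensorProduct.lid F H).toLinearMap ∘ₗ rTensor H eps
  antipode_l2 : mu ∘ₗ lTensor H mu ∘ₗ lTensor H (rTensor H lam)
        ∘ₗ (TensorProduct.assoc F H H H).toLinearMap ∘ₗ rTensor H delta
      = (TensorProduct.lid F H).toLinearMap ∘ₗ rTensor H eps
  antipode_r1 : mu ∘ₗ rTensor H mu ∘ₗ (TensorProduct.assoc F H H H).symm.toLinearMap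
        ∘ₗ lTensor H (rTensor H lam) ∘ₗ lTensor H delta
      = (TensorProduct.rid F H).toLinearMap ∘ₗ lTensor H eps
  antipode_r2 : mu ∘ₗ TensorProduct.map mu lam ∘ₗ (TensorProduct.assoc F H H H).symm.toLinearMap
        ∘ₗ lTensor H delta
      = (TensorProduct.rid F H).toLinearMap ∘ₗ lTensor H eps

section QGDefs

variable (F : Type u) [Field F]
variable {H : Type u} [AddCommGroup H] [Module F H]
variable {A : Type u} [AddCommGroup A] [Module F A]
variable {X : Type u} [AddCommGroup X] [Module F X]

/-- The tensor-product coproduct `δ_{H⊗A} = (H⊗c_{H,A}⊗A)∘(δ_H⊗δ_A)`. -/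
def tensorDelta (dH : H →ₗ[F] H ⊗[F] H) (dA : A →ₗ[F] A ⊗[F] A) :
    H ⊗[F] A →ₗ[F] (H ⊗[F] A) ⊗[F] (H ⊗[F] A) :=
  (TensorProduct.tensorTensorTensorComm F H H A A).toLinearMap ∘ₗ TensorProduct.map dH dA

/-- The tensor-product counit `ε_H⊗ε_A`. -/
def tensorEps (eH : H →ₗ[F] F) (eA : A →ₗ[F] F) : H ⊗[F] A →ₗ[F] F :=
  (TensorProduct.lid F F).toLinearMap ∘ₗ TensorProduct.map eH eA

/-- The tensor-product unit `η_H⊗η_A`. -/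
def tensorEta (uH : F →ₗ[F] H) (uA : F →ₗ[F] A) : F →ₗ[F] H ⊗[F] A :=
  TensorProduct.map uH uA ∘ₗ (TensorProduct.lid F F).symm.toLinearMap

/-- The tensor-product multiplication `(μ_H⊗μ_A)∘(H⊗c_{A,H}⊗A)`. -/
def tensorMu (mH : H ⊗[F] H →ₗ[F] H) (mA : A ⊗[F] A →ₗ[F] A) :
    (H ⊗[F] A) ⊗[F] (H ⊗[F] A) →ₗ[F] H ⊗[F] A :=
  TensorProduct.map mH mA ∘ₗ (TensorProduct.tensorTensorTensorComm F H A H A).toLinearMap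

/-- `Ψ : H⊗A → A⊗H` is a distributive law of the Hopf quasigroup `H` over `A`. -/
def IsDistLaw (QH : HopfQG F H) (QA : HopfQG F A) (Ψ : H ⊗[F] A →ₗ[F] A ⊗[F] H) : Prop :=
  (Ψ ∘ₗ lTensor H QA.mu ∘ₗ TensorProduct.map QH.lam (rTensor A QA.lam)
      = rTensor H QA.mu ∘ₗ (TensorProduct.assoc F A A H).symm.toLinearMap
        ∘ₗ lTensor A Ψ ∘ₗ (TensorProduct.assoc F A H A).toLinearMap
        ∘ₗ rTensor A Ψ ∘ₗ (TensorProduct.assoc F H A A).symm.toLinearMap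
        ∘ₗ TensorProduct.map QH.lam (rTensor A QA.lam))
  ∧ (Ψ ∘ₗ rTensor A QH.mu ∘ₗ TensorProduct.map (lTensor H QH.lam) QA.lam
      = lTensor A QH.mu ∘ₗ (TensorProduct.assoc F A H H).toLinearMap
        ∘ₗ rTensor H Ψ ∘ₗ (TensorProduct.assoc F H A H).symm.toLinearMap
        ∘ₗ lTensor H Ψ ∘ₗ (TensorProduct.assoc F H H A).toLinearMap
        ∘ₗ TensorProduct.map (lTensor H QH.lam) QA.lam)
  ∧ (Ψ ∘ₗ lTensor H QA.eta ∘ₗ (TensorProduct.rid F H).symm.toLinearMap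
      = rTensor H QA.eta ∘ₗ (TensorProduct.lid F H).symm.toLinearMap)
  ∧ (Ψ ∘ₗ rTensor A QH.eta ∘ₗ (TensorProduct.lid F A).symm.toLinearMap
      = lTensor A QH.eta ∘ₗ (TensorProduct.rid F A).symm.toLinearMap)

/-- `Ψ` is a comonoidal distributive law of `H` over `A`. -/
def IsComonoidalDL (QH : HopfQG F H) (QA : HopfQG F A) (Ψ : H ⊗[F] A →ₗ[F] A ⊗[F] H) : Prop :=
  IsDistLaw F QH QA Ψ
  ∧ (tensorDelta F QA.delta QH.delta ∘ₗ Ψ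
      = TensorProduct.map Ψ Ψ ∘ₗ tensorDelta F QH.delta QA.delta)
  ∧ (tensorEps F QA.eps QH.eps ∘ₗ Ψ = tensorEps F QH.eps QA.eps)

/-- `Ψ` is an a-comonoidal distributive law of `H` over `A`. -/
def IsAComonoidalDL (QH : HopfQG F H) (QA : HopfQG F A) (Ψ : H ⊗[F] A →ₗ[F] A ⊗[F] H) : Prop :=
  IsComonoidalDL F QH QA Ψ
  ∧ (lTensor A QH.mu ∘ₗ (TensorProduct.assoc F A H H).toLinearMap
        ∘ₗ TensorProduct.map Ψ QH.mu
        ∘ₗ (TensorProduct.assoc F H A (H ⊗[F] H)).symm.toLinearMap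
        ∘ₗ lTensor H (TensorProduct.assoc F A H H).toLinearMap
        ∘ₗ lTensor H (rTensor H Ψ)
        ∘ₗ lTensor H (TensorProduct.assoc F H A H).symm.toLinearMap
        ∘ₗ (TensorProduct.assoc F H H (A ⊗[F] H)).toLinearMap
        ∘ₗ rTensor (A ⊗[F] H) (rTensor H QH.lam ∘ₗ QH.delta)
      = (TensorProduct.lid F (A ⊗[F] H)).toLinearMap ∘ₗ rTensor (A ⊗[F] H) QH.eps)
  ∧ (lTensor A QH.mu ∘ₗ (TensorProduct.assoc F A H H).toLinearMap
        ∘ₗ TensorProduct.map Ψ QH.mu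
        ∘ₗ (TensorProduct.assoc F H A (H ⊗[F] H)).symm.toLinearMap
        ∘ₗ lTensor H (TensorProduct.assoc F A H H).toLinearMap
        ∘ₗ lTensor H (rTensor H Ψ)
        ∘ₗ lTensor H (TensorProduct.assoc F H A H).symm.toLinearMap
        ∘ₗ (TensorProduct.assoc F H H (A ⊗[F] H)).toLinearMap
        ∘ₗ rTensor (A ⊗[F] H) (lTensor H QH.lam ∘ₗ QH.delta)
      = (TensorProduct.lid F (A ⊗[F] H)).toLinearMap ∘ₗ rTensor (A ⊗[F] H) QH.eps)
  ∧ (rTensor H QA.mu ∘ₗ (TensorProduct.assoc F A A H).symm.toLinearMap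
        ∘ₗ TensorProduct.map QA.mu Ψ
        ∘ₗ (TensorProduct.assoc F A A (H ⊗[F] A)).symm.toLinearMap
        ∘ₗ lTensor A (TensorProduct.assoc F A H A).toLinearMap
        ∘ₗ lTensor A (rTensor A Ψ)
        ∘ₗ lTensor A (TensorProduct.assoc F H A A).symm.toLinearMap
        ∘ₗ (TensorProduct.assoc F A H (A ⊗[F] A)).toLinearMap
        ∘ₗ lTensor (A ⊗[F] H) (rTensor A QA.lam ∘ₗ QA.delta)
      = (TensorProduct.rid F (A ⊗[F] H)).toLinearMap ∘ₗ lTensor (A ⊗[F] H) QA.eps)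
  ∧ (rTensor H QA.mu ∘ₗ (TensorProduct.assoc F A A H).symm.toLinearMap
        ∘ₗ TensorProduct.map QA.mu Ψ
        ∘ₗ (TensorProduct.assoc F A A (H ⊗[F] A)).symm.toLinearMap
        ∘ₗ lTensor A (TensorProduct.assoc F A H A).toLinearMap
        ∘ₗ lTensor A (rTensor A Ψ)
        ∘ₗ lTensor A (TensorProduct.assoc F H A A).symm.toLinearMap
        ∘ₗ (TensorProduct.assoc F A H (A ⊗[F] A)).toLinearMap
        ∘ₗ lTensor (A ⊗[F] H) (lTensor A QA.lam ∘ₗ QA.delta)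
      = (TensorProduct.rid F (A ⊗[F] H)).toLinearMap ∘ₗ lTensor (A ⊗[F] H) QA.eps)

/-- The wreath product multiplication `(μ_A⊗μ_H)∘(A⊗Ψ⊗H)` on `A⊗H`. -/
def wreathMul (QA : HopfQG F A) (QH : HopfQG F H) (Ψ : H ⊗[F] A →ₗ[F] A ⊗[F] H) :
    (A ⊗[F] H) ⊗[F] (A ⊗[F] H) →ₗ[F] A ⊗[F] H :=
  TensorProduct.map QA.mu QH.mu ∘ₗ (TensorProduct.assoc F A A (H ⊗[F] H)).symm.toLinearMap
    ∘ₗ lTensor A ((TensorProduct.assoc F A H H).toLinearMap ∘ₗ rTensor H Ψ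
        ∘ₗ (TensorProduct.assoc F H A H).symm.toLinearMap)
    ∘ₗ (TensorProduct.assoc F A H (A ⊗[F] H)).toLinearMap

/-- The wreath product antipode `Ψ∘(λ_H⊗λ_A)∘c_{A,H}`. -/
def wreathLam (QA : HopfQG F A) (QH : HopfQG F H) (Ψ : H ⊗[F] A →ₗ[F] A ⊗[F] H) :
    A ⊗[F] H →ₗ[F] A ⊗[F] H :=
  Ψ ∘ₗ TensorProduct.map QH.lam QA.lam ∘ₗ (TensorProduct.comm F A H).toLinearMap

/-- `f` is a morphism of Hopf quasigroups. -/
def IsHopfQGMor (Q1 : HopfQG F H) (Q2 : HopfQG F X) (f : H →ₗ[F] X) : Prop :=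
  f ∘ₗ Q1.eta = Q2.eta
  ∧ f ∘ₗ Q1.mu = Q2.mu ∘ₗ TensorProduct.map f f
  ∧ Q2.eps ∘ₗ f = Q1.eps
  ∧ TensorProduct.map f f ∘ₗ Q1.delta = Q2.delta ∘ₗ f

/-- `ω_X = μ_X∘(i_A⊗i_H)`. -/
def omegaMap (QX : HopfQG F X) (iA : A →ₗ[F] X) (iH : H →ₗ[F] X) : A ⊗[F] H →ₗ[F] X :=
  QX.mu ∘ₗ TensorProduct.map iA iH

/-- `θ_X = μ_X∘(i_H⊗i_A)`. -/
def thetaMap (QX : HopfQG F X) (iH : H →ₗ[F] X) (iA : A →ₗ[F] X) : H ⊗[F] A →ₗ[F] X :=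
  QX.mu ∘ₗ TensorProduct.map iH iA

/-- `X` factorizes as `X = AH`. -/
def Factorizes (QX : HopfQG F X) (QH : HopfQG F H) (QA : HopfQG F A)
    (iH : H →ₗ[F] X) (iA : A →ₗ[F] X) : Prop :=
  Function.Bijective (omegaMap F QX iA iH)
  ∧ (QX.mu ∘ₗ rTensor X (omegaMap F QX iA iH)
      = QX.mu ∘ₗ TensorProduct.map iA (QX.mu ∘ₗ rTensor X iH)
          ∘ₗ (TensorProduct.assoc F A H X).toLinearMap)
  ∧ (QX.mu ∘ₗ lTensor X (omegaMap F QX iA iH)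
      = QX.mu ∘ₗ TensorProduct.map (QX.mu ∘ₗ lTensor X iA) iH
          ∘ₗ (TensorProduct.assoc F X A H).symm.toLinearMap)
  ∧ (QX.mu ∘ₗ rTensor X (thetaMap F QX iH iA ∘ₗ TensorProduct.map QH.lam QA.lam)
      = QX.mu ∘ₗ TensorProduct.map (iH ∘ₗ QH.lam) (QX.mu ∘ₗ rTensor X (iA ∘ₗ QA.lam))
          ∘ₗ (TensorProduct.assoc F H A X).toLinearMap)
  ∧ (QX.mu ∘ₗ lTensor X (thetaMap F QX iH iA ∘ₗ TensorProduct.map QH.lam QA.lam)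
      = QX.mu ∘ₗ TensorProduct.map (QX.mu ∘ₗ lTensor X (iH ∘ₗ QH.lam)) (iA ∘ₗ QA.lam)
          ∘ₗ (TensorProduct.assoc F X H A).symm.toLinearMap)

end QGDefs

namespace WreathAux

open TensorProduct LinearMap

variable {F : Type u} [Field F] {H A : Type u}
  [AddCommGroup H] [Module F H] [AddCommGroup A] [Module F A]

variable (QA : HopfQG F A) (QH : HopfQG F H) (Ψ : H ⊗[F] A →ₗ[F] A ⊗[F] H)

/-- `T1 ((x⊗y)⊗k) = x ⊗ μH(y⊗k)` -/
noncomputable def T1 : (A ⊗[F] H) ⊗[F] H →ₗ[F] A ⊗[F] H :=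
  lTensor A QH.mu ∘ₗ (TensorProduct.assoc F A H H).toLinearMap

/-- `T2 (c⊗(x⊗y)) = μA(c⊗x) ⊗ y` -/
noncomputable def T2 : A ⊗[F] (A ⊗[F] H) →ₗ[F] A ⊗[F] H :=
  rTensor H QA.mu ∘ₗ (TensorProduct.assoc F A A H).symm.toLinearMap

/-- `Rm ((u⊗v)⊗c) = μA(u ⊗ Ψ¹(v⊗c)) ⊗ Ψ²(v⊗c)` -/
noncomputable def Rm : (A ⊗[F] H) ⊗[F] A →ₗ[F] A ⊗[F] H :=
  rTensor H QA.mu ∘ₗ (TensorProduct.assoc F A A H).symm.toLinearMap ∘ₗ lTensor A Ψ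
    ∘ₗ (TensorProduct.assoc F A H A).toLinearMap

/-- `R2 (k ⊗ (u⊗v)) = Ψ¹(k⊗u) ⊗ μH(Ψ²(k⊗u) ⊗ v)` -/
noncomputable def R2 : H ⊗[F] (A ⊗[F] H) →ₗ[F] A ⊗[F] H :=
  lTensor A QH.mu ∘ₗ (TensorProduct.assoc F A H H).toLinearMap ∘ₗ rTensor H Ψ
    ∘ₗ (TensorProduct.assoc F H A H).symm.toLinearMap

lemma T1_tmul (x : A) (y : H) (k : H) :
    T1 QH ((x ⊗ₜ[F] y) ⊗ₜ[F] k) = x ⊗ₜ[F] QH.mu (y ⊗ₜ k) := rfl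

lemma T2_tmul (c : A) (x : A) (y : H) :
    T2 QA (c ⊗ₜ[F] (x ⊗ₜ[F] y)) = QA.mu (c ⊗ₜ x) ⊗ₜ[F] y := rfl

/-- basic evaluation of the wreath product multiplication with pure right factor. -/
lemma W1 (w : A ⊗[F] H) (c : A) (k : H) :
    wreathMul F QA QH Ψ (w ⊗ₜ (c ⊗ₜ k)) = T1 QH (Rm QA Ψ (w ⊗ₜ c) ⊗ₜ k) := by
  induction w using TensorProduct.induction_on with
  | zero => simp
  | tmul u v =>
      simp only [wreathMul, Rm, T1, coe_comp, LinearEquiv.coe_coe, Function.comp_apply,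
        assoc_tmul, assoc_symm_tmul, lTensor_tmul, rTensor_tmul, map_tmul]
      generalize Ψ (v ⊗ₜ[F] c) = p
      induction p using TensorProduct.induction_on with
      | zero => simp
      | tmul x y => simp
      | add p q hp hq => simp_all [tmul_add, add_tmul]
  | add w₁ w₂ h1 h2 => simp_all [add_tmul]

/-- basic evaluation of the wreath product multiplication with pure left factor. -/
lemma W2 (w : A ⊗[F] H) (c : A) (k : H) :
    wreathMul F QA QH Ψ ((c ⊗ₜ k) ⊗ₜ w) = T2 QA (c ⊗ₜ R2 QH Ψ (k ⊗ₜ w)) := by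
  induction w using TensorProduct.induction_on with
  | zero => simp
  | tmul u v =>
      simp only [wreathMul, R2, T2, coe_comp, LinearEquiv.coe_coe, Function.comp_apply,
        assoc_tmul, assoc_symm_tmul, lTensor_tmul, rTensor_tmul, map_tmul]
      generalize Ψ (k ⊗ₜ[F] u) = p
      induction p using TensorProduct.induction_on with
      | zero => simp
      | tmul x y => simp
      | add p q hp hq => simp_all [tmul_add, add_tmul]
  | add w₁ w₂ h1 h2 => simp_all [tmul_add]


/-! pointwise forms of the Hopf quasigroup axioms -/

section Pointwise
variable (Q : HopfQG F A)

lemma hmul_one (a : A) : Q.mu (a ⊗ₜ[F] Q.eta 1) = a := by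
  simpa using LinearMap.congr_fun Q.mul_one a

lemma hone_mul (a : A) : Q.mu (Q.eta 1 ⊗ₜ[F] a) = a := by
  simpa using LinearMap.congr_fun Q.one_mul a

lemma hcounit_l (a : A) : (TensorProduct.lid F A) (rTensor A Q.eps (Q.delta a)) = a := by
  simpa using LinearMap.congr_fun Q.counit_left a

lemma hcounit_r (a : A) : (TensorProduct.rid F A) (lTensor A Q.eps (Q.delta a)) = a := by
  simpa using LinearMap.congr_fun Q.counit_right a

lemma hcoassoc (a : A) :
    (TensorProduct.assoc F A A A) (rTensor A Q.delta (Q.delta a))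
      = lTensor A Q.delta (Q.delta a) := by
  simpa using LinearMap.congr_fun Q.coassoc a

lemma heps_eta : Q.eps (Q.eta 1) = 1 := by
  simpa using LinearMap.congr_fun Q.eps_eta 1

lemma heps_mu (x y : A) : Q.eps (Q.mu (x ⊗ₜ[F] y)) = Q.eps x * Q.eps y := by
  simpa [smul_eq_mul] using LinearMap.congr_fun Q.eps_mu (x ⊗ₜ[F] y)

lemma hdelta_eta : Q.delta (Q.eta 1) = Q.eta 1 ⊗ₜ[F] Q.eta 1 := by
  simpa using LinearMap.congr_fun Q.delta_eta 1

lemma hdelta_mu (x y : A) :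
    Q.delta (Q.mu (x ⊗ₜ[F] y))
      = TensorProduct.map Q.mu Q.mu
          ((TensorProduct.tensorTensorTensorComm F A A A A) (Q.delta x ⊗ₜ[F] Q.delta y)) := by
  simpa using LinearMap.congr_fun Q.delta_mu (x ⊗ₜ[F] y)

end Pointwise

/-! the four antipode composites, with pointwise forms -/

noncomputable def KA : (A ⊗[F] A) ⊗[F] A →ₗ[F] A :=
  QA.mu ∘ₗ TensorProduct.map QA.lam QA.mu ∘ₗ (TensorProduct.assoc F A A A).toLinearMap

noncomputable def KA2 : (A ⊗[F] A) ⊗[F] A →ₗ[F] A :=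
  QA.mu ∘ₗ lTensor A QA.mu ∘ₗ lTensor A (rTensor A QA.lam)
    ∘ₗ (TensorProduct.assoc F A A A).toLinearMap

noncomputable def KH3 : H ⊗[F] (H ⊗[F] H) →ₗ[F] H :=
  QH.mu ∘ₗ rTensor H QH.mu ∘ₗ (TensorProduct.assoc F H H H).symm.toLinearMap
    ∘ₗ lTensor H (rTensor H QH.lam)

noncomputable def KH4 : H ⊗[F] (H ⊗[F] H) →ₗ[F] H :=
  QH.mu ∘ₗ TensorProduct.map QH.mu QH.lam ∘ₗ (TensorProduct.assoc F H H H).symm.toLinearMap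

lemma hKA (a x : A) : KA QA (QA.delta a ⊗ₜ[F] x) = QA.eps a • x := by
  simpa [KA] using LinearMap.congr_fun QA.antipode_l1 (a ⊗ₜ[F] x)

lemma hKA2 (a x : A) : KA2 QA (QA.delta a ⊗ₜ[F] x) = QA.eps a • x := by
  simpa [KA2] using LinearMap.congr_fun QA.antipode_l2 (a ⊗ₜ[F] x)

lemma hKH3 (g h : H) : KH3 QH (g ⊗ₜ[F] QH.delta h) = QH.eps h • g := by
  simpa [KH3] using LinearMap.congr_fun QH.antipode_r1 (g ⊗ₜ[F] h)

lemma hKH4 (g h : H) : KH4 QH (g ⊗ₜ[F] QH.delta h) = QH.eps h • g := by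
  simpa [KH4] using LinearMap.congr_fun QH.antipode_r2 (g ⊗ₜ[F] h)

/-! pointwise forms of the distributive law axioms -/

variable {QA QH Ψ} in
lemma d3e (hΨ : IsAComonoidalDL F QH QA Ψ) (h : H) :
    Ψ (h ⊗ₜ[F] QA.eta 1) = QA.eta 1 ⊗ₜ[F] h := by
  obtain ⟨⟨⟨hd1, hd2, hd3, hd4⟩, hcd, hce⟩, hac1, hac2, hac3, hac4⟩ := hΨ
  simpa using LinearMap.congr_fun hd3 h

variable {QA QH Ψ} in
lemma d4e (hΨ : IsAComonoidalDL F QH QA Ψ) (a : A) :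
    Ψ (QH.eta 1 ⊗ₜ[F] a) = a ⊗ₜ[F] QH.eta 1 := by
  obtain ⟨⟨⟨hd1, hd2, hd3, hd4⟩, hcd, hce⟩, hac1, hac2, hac3, hac4⟩ := hΨ
  simpa using LinearMap.congr_fun hd4 a

variable {QA QH Ψ} in
lemma d1e (hΨ : IsAComonoidalDL F QH QA Ψ) (h : H) (a c : A) :
    Ψ (QH.lam h ⊗ₜ[F] QA.mu (QA.lam a ⊗ₜ c))
      = Rm QA Ψ (Ψ (QH.lam h ⊗ₜ QA.lam a) ⊗ₜ c) := by
  obtain ⟨⟨⟨hd1, hd2, hd3, hd4⟩, hcd, hce⟩, hac1, hac2, hac3, hac4⟩ := hΨ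
  simpa [Rm] using LinearMap.congr_fun hd1 (h ⊗ₜ[F] (a ⊗ₜ[F] c))

variable {QA QH Ψ} in
lemma d2e (hΨ : IsAComonoidalDL F QH QA Ψ) (k h : H) (a : A) :
    Ψ (QH.mu (k ⊗ₜ[F] QH.lam h) ⊗ₜ[F] QA.lam a)
      = R2 QH Ψ (k ⊗ₜ Ψ (QH.lam h ⊗ₜ QA.lam a)) := by
  obtain ⟨⟨⟨hd1, hd2, hd3, hd4⟩, hcd, hce⟩, hac1, hac2, hac3, hac4⟩ := hΨ
  simpa [R2] using LinearMap.congr_fun hd2 ((k ⊗ₜ[F] h) ⊗ₜ[F] a)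

variable {QA QH Ψ} in
lemma hcde (hΨ : IsAComonoidalDL F QH QA Ψ) (h : H) (a : A) :
    tensorDelta F QA.delta QH.delta (Ψ (h ⊗ₜ[F] a))
      = TensorProduct.map Ψ Ψ
          ((TensorProduct.tensorTensorTensorComm F H H A A) (QH.delta h ⊗ₜ[F] QA.delta a)) := by
  obtain ⟨⟨⟨hd1, hd2, hd3, hd4⟩, hcd, hce⟩, hac1, hac2, hac3, hac4⟩ := hΨ
  simpa [tensorDelta] using LinearMap.congr_fun hcd (h ⊗ₜ[F] a)

variable {QA QH Ψ} in
lemma hcee (hΨ : IsAComonoidalDL F QH QA Ψ) (h : H) (a : A) :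
    tensorEps F QA.eps QH.eps (Ψ (h ⊗ₜ[F] a)) = QH.eps h * QA.eps a := by
  obtain ⟨⟨⟨hd1, hd2, hd3, hd4⟩, hcd, hce⟩, hac1, hac2, hac3, hac4⟩ := hΨ
  simpa [tensorEps, smul_eq_mul] using LinearMap.congr_fun hce (h ⊗ₜ[F] a)

/-! the a-comonoidality composites and pointwise forms -/

noncomputable def AC1 : (H ⊗[F] H) ⊗[F] (A ⊗[F] H) →ₗ[F] A ⊗[F] H :=
  lTensor A QH.mu ∘ₗ (TensorProduct.assoc F A H H).toLinearMap
    ∘ₗ TensorProduct.map Ψ QH.mu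
    ∘ₗ (TensorProduct.assoc F H A (H ⊗[F] H)).symm.toLinearMap
    ∘ₗ lTensor H (TensorProduct.assoc F A H H).toLinearMap
    ∘ₗ lTensor H (rTensor H Ψ)
    ∘ₗ lTensor H (TensorProduct.assoc F H A H).symm.toLinearMap
    ∘ₗ (TensorProduct.assoc F H H (A ⊗[F] H)).toLinearMap

noncomputable def AC3 : (A ⊗[F] H) ⊗[F] (A ⊗[F] A) →ₗ[F] A ⊗[F] H :=
  rTensor H QA.mu ∘ₗ (TensorProduct.assoc F A A H).symm.toLinearMap
    ∘ₗ TensorProduct.map QA.mu Ψ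
    ∘ₗ (TensorProduct.assoc F A A (H ⊗[F] A)).symm.toLinearMap
    ∘ₗ lTensor A (TensorProduct.assoc F A H A).toLinearMap
    ∘ₗ lTensor A (rTensor A Ψ)
    ∘ₗ lTensor A (TensorProduct.assoc F H A A).symm.toLinearMap
    ∘ₗ (TensorProduct.assoc F A H (A ⊗[F] A)).toLinearMap

variable {QA QH Ψ} in
lemma hac1e (hΨ : IsAComonoidalDL F QH QA Ψ) (h : H) (b : A) (g : H) :
    AC1 QH Ψ (rTensor H QH.lam (QH.delta h) ⊗ₜ[F] (b ⊗ₜ[F] g))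
      = QH.eps h • (b ⊗ₜ[F] g) := by
  obtain ⟨⟨⟨hd1, hd2, hd3, hd4⟩, hcd, hce⟩, hac1, hac2, hac3, hac4⟩ := hΨ
  simpa [AC1] using LinearMap.congr_fun hac1 (h ⊗ₜ[F] (b ⊗ₜ[F] g))

variable {QA QH Ψ} in
lemma hac2e (hΨ : IsAComonoidalDL F QH QA Ψ) (h : H) (b : A) (g : H) :
    AC1 QH Ψ (lTensor H QH.lam (QH.delta h) ⊗ₜ[F] (b ⊗ₜ[F] g))
      = QH.eps h • (b ⊗ₜ[F] g) := by
  obtain ⟨⟨⟨hd1, hd2, hd3, hd4⟩, hcd, hce⟩, hac1, hac2, hac3, hac4⟩ := hΨ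
  simpa [AC1] using LinearMap.congr_fun hac2 (h ⊗ₜ[F] (b ⊗ₜ[F] g))

variable {QA QH Ψ} in
lemma hac3e (hΨ : IsAComonoidalDL F QH QA Ψ) (b : A) (g : H) (a : A) :
    AC3 QA Ψ ((b ⊗ₜ[F] g) ⊗ₜ[F] rTensor A QA.lam (QA.delta a))
      = QA.eps a • (b ⊗ₜ[F] g) := by
  obtain ⟨⟨⟨hd1, hd2, hd3, hd4⟩, hcd, hce⟩, hac1, hac2, hac3, hac4⟩ := hΨ
  simpa [AC3] using LinearMap.congr_fun hac3 ((b ⊗ₜ[F] g) ⊗ₜ[F] a)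

variable {QA QH Ψ} in
lemma hac4e (hΨ : IsAComonoidalDL F QH QA Ψ) (b : A) (g : H) (a : A) :
    AC3 QA Ψ ((b ⊗ₜ[F] g) ⊗ₜ[F] lTensor A QA.lam (QA.delta a))
      = QA.eps a • (b ⊗ₜ[F] g) := by
  obtain ⟨⟨⟨hd1, hd2, hd3, hd4⟩, hcd, hce⟩, hac1, hac2, hac3, hac4⟩ := hΨ
  simpa [AC3] using LinearMap.congr_fun hac4 ((b ⊗ₜ[F] g) ⊗ₜ[F] a)

/-! evaluation of the wreath multiplication against the antipode -/

/-- `Nm (h' ⊗ (a' ⊗ (c⊗k))) = T1 (Ψ(h' ⊗ μA(a'⊗c)) ⊗ k)` -/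
noncomputable def Nm : H ⊗[F] (A ⊗[F] (A ⊗[F] H)) →ₗ[F] A ⊗[F] H :=
  T1 QH ∘ₗ rTensor H Ψ ∘ₗ (TensorProduct.assoc F H A H).symm.toLinearMap
    ∘ₗ lTensor H (rTensor H QA.mu)
    ∘ₗ lTensor H (TensorProduct.assoc F A A H).symm.toLinearMap

/-- `N2 ((c⊗k) ⊗ (h⊗a)) = T2 (c ⊗ Ψ(μH(k⊗λh) ⊗ λa))` -/
noncomputable def N2 : (A ⊗[F] H) ⊗[F] (H ⊗[F] A) →ₗ[F] A ⊗[F] H :=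
  T2 QA ∘ₗ lTensor A Ψ
    ∘ₗ lTensor A (TensorProduct.map (QH.mu ∘ₗ lTensor H QH.lam) QA.lam)
    ∘ₗ lTensor A (TensorProduct.assoc F H H A).symm.toLinearMap
    ∘ₗ (TensorProduct.assoc F A H (H ⊗[F] A)).toLinearMap

variable {QA QH Ψ} in
lemma L1z (hΨ : IsAComonoidalDL F QH QA Ψ) (h : H) (a : A) (z : A ⊗[F] H) :
    wreathMul F QA QH Ψ (Ψ (QH.lam h ⊗ₜ[F] QA.lam a) ⊗ₜ[F] z)
      = Nm QA QH Ψ (QH.lam h ⊗ₜ (QA.lam a ⊗ₜ z)) := by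
  induction z using TensorProduct.induction_on with
  | zero => simp
  | tmul c k =>
      rw [W1, ← d1e hΨ]
      simp [Nm]
  | add z₁ z₂ h1 h2 => simp_all [tmul_add]

variable {QA QH Ψ} in
lemma L2z (hΨ : IsAComonoidalDL F QH QA Ψ) (h : H) (a : A) (z : A ⊗[F] H) :
    wreathMul F QA QH Ψ (z ⊗ₜ[F] Ψ (QH.lam h ⊗ₜ[F] QA.lam a))
      = N2 QA QH Ψ (z ⊗ₜ (h ⊗ₜ a)) := by
  induction z using TensorProduct.induction_on with
  | zero => simp
  | tmul c k =>
      rw [W2, ← d2e hΨ]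
      simp [N2]
  | add z₁ z₂ h1 h2 => simp_all [add_tmul]

/-! the easy wreath axioms -/

variable {QA QH Ψ} in
lemma mul_one_W (hΨ : IsAComonoidalDL F QH QA Ψ) :
    wreathMul F QA QH Ψ ∘ₗ lTensor (A ⊗[F] H) (tensorEta F QA.eta QH.eta)
        ∘ₗ (TensorProduct.rid F (A ⊗[F] H)).symm.toLinearMap = LinearMap.id := by
  apply TensorProduct.ext'
  intro a h
  simp [tensorEta, W1, Rm, T1, d3e hΨ, hmul_one]

variable {QA QH Ψ} in
lemma one_mul_W (hΨ : IsAComonoidalDL F QH QA Ψ) :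
    wreathMul F QA QH Ψ ∘ₗ rTensor (A ⊗[F] H) (tensorEta F QA.eta QH.eta)
        ∘ₗ (TensorProduct.lid F (A ⊗[F] H)).symm.toLinearMap = LinearMap.id := by
  apply TensorProduct.ext'
  intro a h
  simp [tensorEta, W2, R2, T2, d4e hΨ, hone_mul]

lemma CL1 (t : A ⊗[F] A) (u : H ⊗[F] H) :
    (TensorProduct.lid F (A ⊗[F] H))
        (rTensor (A ⊗[F] H) (tensorEps F QA.eps QH.eps)
          ((TensorProduct.tensorTensorTensorComm F A A H H) (t ⊗ₜ u)))
      = (TensorProduct.lid F A) (rTensor A QA.eps t)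
          ⊗ₜ[F] (TensorProduct.lid F H) (rTensor H QH.eps u) := by
  induction t using TensorProduct.induction_on with
  | zero => simp
  | tmul a₁ a₂ =>
      induction u using TensorProduct.induction_on with
      | zero => simp
      | tmul h₁ h₂ => simp [tensorEps, smul_tmul', smul_smul, mul_comm]
      | add u₁ u₂ h1 h2 => simp_all [tmul_add, add_tmul]
  | add t₁ t₂ h1 h2 => simp_all [tmul_add, add_tmul]

lemma CL2 (t : A ⊗[F] A) (u : H ⊗[F] H) :
    (TensorProduct.rid F (A ⊗[F] H))
        (lTensor (A ⊗[F] H) (tensorEps F QA.eps QH.eps)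
          ((TensorProduct.tensorTensorTensorComm F A A H H) (t ⊗ₜ u)))
      = (TensorProduct.rid F A) (lTensor A QA.eps t)
          ⊗ₜ[F] (TensorProduct.rid F H) (lTensor H QH.eps u) := by
  induction t using TensorProduct.induction_on with
  | zero => simp
  | tmul a₁ a₂ =>
      induction u using TensorProduct.induction_on with
      | zero => simp
      | tmul h₁ h₂ => simp [tensorEps, smul_tmul', smul_smul, mul_comm]
      | add u₁ u₂ h1 h2 => simp_all [tmul_add, add_tmul]
  | add t₁ t₂ h1 h2 => simp_all [tmul_add, add_tmul]

lemma counit_left_W :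
    (TensorProduct.lid F (A ⊗[F] H)).toLinearMap
        ∘ₗ rTensor (A ⊗[F] H) (tensorEps F QA.eps QH.eps)
        ∘ₗ tensorDelta F QA.delta QH.delta = LinearMap.id := by
  apply TensorProduct.ext'
  intro a h
  simp [tensorDelta, CL1, hcounit_l]

lemma counit_right_W :
    (TensorProduct.rid F (A ⊗[F] H)).toLinearMap
        ∘ₗ lTensor (A ⊗[F] H) (tensorEps F QA.eps QH.eps)
        ∘ₗ tensorDelta F QA.delta QH.delta = LinearMap.id := by
  apply TensorProduct.ext'
  intro a h
  simp [tensorDelta, CL2, hcounit_r]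

/-- shuffles for coassociativity -/
noncomputable def Arr1 : ((A ⊗[F] A) ⊗[F] A) ⊗[F] ((H ⊗[F] H) ⊗[F] H)
    →ₗ[F] ((A ⊗[F] H) ⊗[F] (A ⊗[F] H)) ⊗[F] (A ⊗[F] H) :=
  rTensor (A ⊗[F] H) (TensorProduct.tensorTensorTensorComm F A A H H).toLinearMap
    ∘ₗ (TensorProduct.tensorTensorTensorComm F (A ⊗[F] A) A (H ⊗[F] H) H).toLinearMap

noncomputable def Arr2 : (A ⊗[F] (A ⊗[F] A)) ⊗[F] (H ⊗[F] (H ⊗[F] H))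
    →ₗ[F] (A ⊗[F] H) ⊗[F] ((A ⊗[F] H) ⊗[F] (A ⊗[F] H)) :=
  lTensor (A ⊗[F] H) (TensorProduct.tensorTensorTensorComm F A A H H).toLinearMap
    ∘ₗ (TensorProduct.tensorTensorTensorComm F A (A ⊗[F] A) H (H ⊗[F] H)).toLinearMap

lemma CO1 (t : A ⊗[F] A) (u : H ⊗[F] H) :
    rTensor (A ⊗[F] H) (tensorDelta F QA.delta QH.delta)
        ((TensorProduct.tensorTensorTensorComm F A A H H) (t ⊗ₜ u))
      = Arr1 ((rTensor A QA.delta t) ⊗ₜ (rTensor H QH.delta u)) := by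
  induction t using TensorProduct.induction_on with
  | zero => simp
  | tmul a₁ a₂ =>
      induction u using TensorProduct.induction_on with
      | zero => simp
      | tmul h₁ h₂ => simp [tensorDelta, Arr1]
      | add u₁ u₂ h1 h2 => simp_all [tmul_add, add_tmul]
  | add t₁ t₂ h1 h2 => simp_all [tmul_add, add_tmul]

lemma CO2 (p : (A ⊗[F] A) ⊗[F] A) (q : (H ⊗[F] H) ⊗[F] H) :
    (TensorProduct.assoc F (A ⊗[F] H) (A ⊗[F] H) (A ⊗[F] H)) (Arr1 (p ⊗ₜ q))
      = Arr2 ((TensorProduct.assoc F A A A p) ⊗ₜ (TensorProduct.assoc F H H H q)) := by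
  induction p using TensorProduct.induction_on with
  | zero => simp
  | tmul t a₃ =>
      induction q using TensorProduct.induction_on with
      | zero => simp
      | tmul u h₃ =>
          induction t using TensorProduct.induction_on with
          | zero => simp
          | tmul a₁ a₂ =>
              induction u using TensorProduct.induction_on with
              | zero => simp
              | tmul h₁ h₂ => simp [Arr1, Arr2]
              | add u₁ u₂ h1 h2 => simp_all [tmul_add, add_tmul]
          | add t₁ t₂ h1 h2 => simp_all [tmul_add, add_tmul]
      | add q₁ q₂ h1 h2 => simp_all [tmul_add, add_tmul]
  | add p₁ p₂ h1 h2 => simp_all [tmul_add, add_tmul]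

lemma CO3 (t : A ⊗[F] A) (u : H ⊗[F] H) :
    lTensor (A ⊗[F] H) (tensorDelta F QA.delta QH.delta)
        ((TensorProduct.tensorTensorTensorComm F A A H H) (t ⊗ₜ u))
      = Arr2 ((lTensor A QA.delta t) ⊗ₜ (lTensor H QH.delta u)) := by
  induction t using TensorProduct.induction_on with
  | zero => simp
  | tmul a₁ a₂ =>
      induction u using TensorProduct.induction_on with
      | zero => simp
      | tmul h₁ h₂ => simp [tensorDelta, Arr2]
      | add u₁ u₂ h1 h2 => simp_all [tmul_add, add_tmul]
  | add t₁ t₂ h1 h2 => simp_all [tmul_add, add_tmul]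

lemma coassoc_W :
    (TensorProduct.assoc F (A ⊗[F] H) (A ⊗[F] H) (A ⊗[F] H)).toLinearMap
        ∘ₗ rTensor (A ⊗[F] H) (tensorDelta F QA.delta QH.delta)
        ∘ₗ tensorDelta F QA.delta QH.delta
      = lTensor (A ⊗[F] H) (tensorDelta F QA.delta QH.delta)
          ∘ₗ tensorDelta F QA.delta QH.delta := by
  apply TensorProduct.ext'
  intro a h
  have e1 : tensorDelta F QA.delta QH.delta (a ⊗ₜ[F] h)
      = (TensorProduct.tensorTensorTensorComm F A A H H) (QA.delta a ⊗ₜ QH.delta h) := by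
    simp [tensorDelta]
  simp only [coe_comp, Function.comp_apply, LinearEquiv.coe_coe, e1, CO1, CO2, CO3,
    hcoassoc]

lemma eps_eta_W :
    tensorEps F QA.eps QH.eps ∘ₗ tensorEta F QA.eta QH.eta = LinearMap.id := by
  apply LinearMap.ext_ring
  simp [tensorEps, tensorEta, heps_eta]

lemma delta_eta_W :
    tensorDelta F QA.delta QH.delta ∘ₗ tensorEta F QA.eta QH.eta
      = TensorProduct.map (tensorEta F QA.eta QH.eta) (tensorEta F QA.eta QH.eta)
          ∘ₗ (TensorProduct.lid F F).symm.toLinearMap := by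
  apply LinearMap.ext_ring
  simp [tensorDelta, tensorEta, hdelta_eta]

lemma EPS1 (a : A) (g : H) (w : A ⊗[F] H) :
    tensorEps F QA.eps QH.eps
        (T1 QH (rTensor H QA.mu ((TensorProduct.assoc F A A H).symm (a ⊗ₜ w)) ⊗ₜ g))
      = (QA.eps a * QH.eps g) * tensorEps F QA.eps QH.eps w := by
  induction w using TensorProduct.induction_on with
  | zero => simp
  | tmul x y =>
      simp [T1, tensorEps, heps_mu, smul_eq_mul]
      ring
  | add w₁ w₂ h1 h2 =>
      simp_all [tmul_add, add_tmul, mul_add]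

variable {QA QH Ψ} in
lemma eps_mu_W (hΨ : IsAComonoidalDL F QH QA Ψ) :
    tensorEps F QA.eps QH.eps ∘ₗ wreathMul F QA QH Ψ
      = (TensorProduct.lid F F).toLinearMap
          ∘ₗ TensorProduct.map (tensorEps F QA.eps QH.eps) (tensorEps F QA.eps QH.eps) := by
  apply TensorProduct.ext'
  intro x y
  induction x using TensorProduct.induction_on with
  | zero => simp
  | tmul a h =>
      induction y using TensorProduct.induction_on with
      | zero => simp
      | tmul b g =>
          simp only [coe_comp, Function.comp_apply, LinearEquiv.coe_coe, W1]
          simp only [Rm, coe_comp, LinearEquiv.coe_coe, Function.comp_apply, assoc_tmul,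
            lTensor_tmul]
          rw [EPS1, hcee hΨ]
          simp [tensorEps, smul_eq_mul]
          ring
      | add y₁ y₂ h1 h2 => simp_all [tmul_add]
  | add x₁ x₂ h1 h2 => simp_all [add_tmul]

/-! antipode axiom l1 -/

noncomputable def J1 : (H ⊗[F] H) ⊗[F] (A ⊗[F] H) →ₗ[F] H ⊗[F] ((A ⊗[F] H) ⊗[F] H) :=
  lTensor H (rTensor H Ψ) ∘ₗ lTensor H (TensorProduct.assoc F H A H).symm.toLinearMap
    ∘ₗ (TensorProduct.assoc F H H (A ⊗[F] H)).toLinearMap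

noncomputable def Q1 : (A ⊗[F] A) ⊗[F] (H ⊗[F] ((A ⊗[F] H) ⊗[F] H)) →ₗ[F] A ⊗[F] H :=
  T1 QH ∘ₗ rTensor H Ψ ∘ₗ rTensor H (TensorProduct.comm F A H).toLinearMap
    ∘ₗ (TensorProduct.assoc F A H H).symm.toLinearMap
    ∘ₗ TensorProduct.map (KA QA) (rTensor H QH.lam)
    ∘ₗ (TensorProduct.tensorTensorTensorComm F (A ⊗[F] A) H A H).toLinearMap
    ∘ₗ (TensorProduct.assoc F (A ⊗[F] A) H (A ⊗[F] H)).symm.toLinearMap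
    ∘ₗ lTensor (A ⊗[F] A) (lTensor H (T1 QH))

noncomputable def Th1 : (A ⊗[F] A) ⊗[F] ((H ⊗[F] H) ⊗[F] (A ⊗[F] H)) →ₗ[F] A ⊗[F] H :=
  Q1 QA QH Ψ ∘ₗ lTensor (A ⊗[F] A) (J1 Ψ)

variable {QA QH Ψ} in
lemma ML1 (hΨ : IsAComonoidalDL F QH QA Ψ) (t : A ⊗[F] A) (u : H ⊗[F] H) (b : A) (g : H) :
    wreathMul F QA QH Ψ
        (TensorProduct.map (wreathLam F QA QH Ψ) (wreathMul F QA QH Ψ)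
          ((TensorProduct.assoc F (A ⊗[F] H) (A ⊗[F] H) (A ⊗[F] H))
            ((TensorProduct.tensorTensorTensorComm F A A H H) (t ⊗ₜ u) ⊗ₜ (b ⊗ₜ g))))
      = Th1 QA QH Ψ (t ⊗ₜ (u ⊗ₜ (b ⊗ₜ g))) := by
  induction t using TensorProduct.induction_on with
  | zero => simp
  | tmul a₁ a₂ =>
      induction u using TensorProduct.induction_on with
      | zero => simp
      | tmul h₁ h₂ =>
          simp only [tensorTensorTensorComm_tmul, assoc_tmul, map_tmul, wreathLam,
            coe_comp, Function.comp_apply, LinearEquiv.coe_coe, comm_tmul]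
          rw [W1, L1z hΨ]
          simp only [Th1, Q1, J1, Rm, Nm, coe_comp, Function.comp_apply,
            LinearEquiv.coe_coe, lTensor_tmul, rTensor_tmul, assoc_tmul, assoc_symm_tmul,
            tensorTensorTensorComm_tmul, map_tmul, comm_tmul]
          generalize Ψ (h₂ ⊗ₜ[F] b) = w
          induction w using TensorProduct.induction_on with
          | zero => simp [T1]
          | tmul x y => simp [T1, KA]
          | add w₁ w₂ hw1 hw2 => simp_all [tmul_add, add_tmul]
      | add u₁ u₂ h1 h2 => simp_all [tmul_add, add_tmul]
  | add t₁ t₂ h1 h2 => simp_all [tmul_add, add_tmul]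

variable {QA QH Ψ} in
lemma S2l1 (a : A) (u : H ⊗[F] H) (b : A) (g : H) :
    Th1 QA QH Ψ (QA.delta a ⊗ₜ (u ⊗ₜ (b ⊗ₜ g)))
      = QA.eps a • AC1 QH Ψ (rTensor H QH.lam u ⊗ₜ (b ⊗ₜ g)) := by
  induction u using TensorProduct.induction_on with
  | zero => simp
  | tmul h₁ h₂ =>
      simp only [Th1, Q1, J1, AC1, coe_comp, Function.comp_apply, LinearEquiv.coe_coe,
        lTensor_tmul, rTensor_tmul, assoc_tmul, assoc_symm_tmul,
        tensorTensorTensorComm_tmul, map_tmul, comm_tmul]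
      generalize Ψ (h₂ ⊗ₜ[F] b) = w
      induction w using TensorProduct.induction_on with
      | zero => simp [T1]
      | tmul x y =>
          simp only [T1, coe_comp, Function.comp_apply, LinearEquiv.coe_coe, assoc_tmul,
            assoc_symm_tmul, lTensor_tmul, rTensor_tmul, map_tmul, comm_tmul, tensorTensorTensorComm_tmul, hKA,
            smul_tmul, tmul_smul, map_smul]
      | add w₁ w₂ hw1 hw2 => simp_all [tmul_add, add_tmul, smul_add]
  | add u₁ u₂ h1 h2 => simp_all [tmul_add, add_tmul, smul_add]

variable {QA QH Ψ} in
lemma antipode_l1_W (hΨ : IsAComonoidalDL F QH QA Ψ) :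
    wreathMul F QA QH Ψ
        ∘ₗ TensorProduct.map (wreathLam F QA QH Ψ) (wreathMul F QA QH Ψ)
        ∘ₗ (TensorProduct.assoc F (A ⊗[F] H) (A ⊗[F] H) (A ⊗[F] H)).toLinearMap
        ∘ₗ rTensor (A ⊗[F] H) (tensorDelta F QA.delta QH.delta)
      = (TensorProduct.lid F (A ⊗[F] H)).toLinearMap
          ∘ₗ rTensor (A ⊗[F] H) (tensorEps F QA.eps QH.eps) := by
  apply TensorProduct.ext'
  intro x y
  induction x using TensorProduct.induction_on with
  | zero => simp
  | tmul a h =>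
      induction y using TensorProduct.induction_on with
      | zero => simp
      | tmul b g =>
          have e1 : tensorDelta F QA.delta QH.delta (a ⊗ₜ[F] h)
              = (TensorProduct.tensorTensorTensorComm F A A H H)
                  (QA.delta a ⊗ₜ QH.delta h) := by simp [tensorDelta]
          simp only [coe_comp, Function.comp_apply, LinearEquiv.coe_coe, rTensor_tmul, e1]
          rw [ML1 hΨ, S2l1, hac1e hΨ]
          simp [tensorEps, smul_smul]
      | add y₁ y₂ h1 h2 => simp_all [tmul_add]
  | add x₁ x₂ h1 h2 => simp_all [add_tmul]

/-! antipode axiom l2 -/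

noncomputable def Th2 : (A ⊗[F] A) ⊗[F] ((H ⊗[F] H) ⊗[F] (A ⊗[F] H)) →ₗ[F] A ⊗[F] H :=
  T2 QA ∘ₗ lTensor A (AC1 QH Ψ ∘ₗ rTensor (A ⊗[F] H) (lTensor H QH.lam))
    ∘ₗ (TensorProduct.assoc F A (H ⊗[F] H) (A ⊗[F] H)).toLinearMap
    ∘ₗ (TensorProduct.tensorTensorTensorComm F A A (H ⊗[F] H) H).toLinearMap
    ∘ₗ rTensor ((H ⊗[F] H) ⊗[F] H)
        (lTensor A (QA.mu ∘ₗ rTensor A QA.lam) ∘ₗ (TensorProduct.assoc F A A A).toLinearMap)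
    ∘ₗ (TensorProduct.tensorTensorTensorComm F (A ⊗[F] A) (H ⊗[F] H) A H).toLinearMap
    ∘ₗ (TensorProduct.assoc F (A ⊗[F] A) (H ⊗[F] H) (A ⊗[F] H)).symm.toLinearMap

variable {QA QH Ψ} in
lemma ML2 (hΨ : IsAComonoidalDL F QH QA Ψ) (t : A ⊗[F] A) (u : H ⊗[F] H) (b : A) (g : H) :
    wreathMul F QA QH Ψ
        (lTensor (A ⊗[F] H) (wreathMul F QA QH Ψ)
          (lTensor (A ⊗[F] H) (rTensor (A ⊗[F] H) (wreathLam F QA QH Ψ))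
            ((TensorProduct.assoc F (A ⊗[F] H) (A ⊗[F] H) (A ⊗[F] H))
              ((TensorProduct.tensorTensorTensorComm F A A H H) (t ⊗ₜ u) ⊗ₜ (b ⊗ₜ g)))))
      = Th2 QA QH Ψ (t ⊗ₜ (u ⊗ₜ (b ⊗ₜ g))) := by
  induction t using TensorProduct.induction_on with
  | zero => simp
  | tmul a₁ a₂ =>
      induction u using TensorProduct.induction_on with
      | zero => simp
      | tmul h₁ h₂ =>
          simp only [tensorTensorTensorComm_tmul, assoc_tmul, map_tmul, wreathLam,
            lTensor_tmul, rTensor_tmul, coe_comp, Function.comp_apply, LinearEquiv.coe_coe,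
            comm_tmul]
          rw [L1z hΨ, W2]
          simp only [Th2, Nm, R2, AC1, T1, coe_comp, Function.comp_apply,
            LinearEquiv.coe_coe, lTensor_tmul, rTensor_tmul, assoc_tmul, assoc_symm_tmul,
            tensorTensorTensorComm_tmul, map_tmul, comm_tmul]
          generalize Ψ (QH.lam h₂ ⊗ₜ[F] QA.mu (QA.lam a₂ ⊗ₜ[F] b)) = w
          induction w using TensorProduct.induction_on with
          | zero => simp [T2]
          | tmul x y => simp [T2]
          | add w₁ w₂ hw1 hw2 => simp_all [tmul_add, add_tmul]
      | add u₁ u₂ h1 h2 => simp_all [tmul_add, add_tmul]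
  | add t₁ t₂ h1 h2 => simp_all [tmul_add, add_tmul]

variable {QA QH Ψ} in
lemma S2l2 (hΨ : IsAComonoidalDL F QH QA Ψ) (t : A ⊗[F] A) (h : H) (b : A) (g : H) :
    Th2 QA QH Ψ (t ⊗ₜ (QH.delta h ⊗ₜ (b ⊗ₜ g)))
      = QH.eps h • (KA2 QA (t ⊗ₜ b) ⊗ₜ[F] g) := by
  induction t using TensorProduct.induction_on with
  | zero => simp
  | tmul a₁ a₂ =>
      simp only [Th2, KA2, coe_comp, Function.comp_apply, LinearEquiv.coe_coe,
        lTensor_tmul, rTensor_tmul, assoc_tmul, assoc_symm_tmul,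
        tensorTensorTensorComm_tmul, map_tmul]
      rw [hac2e hΨ]
      simp [T2, tmul_smul]
  | add t₁ t₂ h1 h2 => simp_all [add_tmul, smul_add]

variable {QA QH Ψ} in
lemma antipode_l2_W (hΨ : IsAComonoidalDL F QH QA Ψ) :
    wreathMul F QA QH Ψ
        ∘ₗ lTensor (A ⊗[F] H) (wreathMul F QA QH Ψ)
        ∘ₗ lTensor (A ⊗[F] H) (rTensor (A ⊗[F] H) (wreathLam F QA QH Ψ))
        ∘ₗ (TensorProduct.assoc F (A ⊗[F] H) (A ⊗[F] H) (A ⊗[F] H)).toLinearMap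
        ∘ₗ rTensor (A ⊗[F] H) (tensorDelta F QA.delta QH.delta)
      = (TensorProduct.lid F (A ⊗[F] H)).toLinearMap
          ∘ₗ rTensor (A ⊗[F] H) (tensorEps F QA.eps QH.eps) := by
  apply TensorProduct.ext'
  intro x y
  induction x using TensorProduct.induction_on with
  | zero => simp
  | tmul a h =>
      induction y using TensorProduct.induction_on with
      | zero => simp
      | tmul b g =>
          have e1 : tensorDelta F QA.delta QH.delta (a ⊗ₜ[F] h)
              = (TensorProduct.tensorTensorTensorComm F A A H H)
                  (QA.delta a ⊗ₜ QH.delta h) := by simp [tensorDelta]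
          simp only [coe_comp, Function.comp_apply, LinearEquiv.coe_coe, rTensor_tmul, e1]
          rw [ML2 hΨ, S2l2 hΨ, hKA2]
          simp [tensorEps, smul_smul, smul_tmul', mul_comm]
      | add y₁ y₂ h1 h2 => simp_all [tmul_add]
  | add x₁ x₂ h1 h2 => simp_all [add_tmul]

/-! antipode axiom r1 -/

noncomputable def In3 : (A ⊗[F] H) ⊗[F] (H ⊗[F] H) →ₗ[F] (A ⊗[F] H) ⊗[F] H :=
  (TensorProduct.assoc F A H H).symm.toLinearMap ∘ₗ lTensor A (rTensor H QH.mu)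
    ∘ₗ lTensor A (TensorProduct.assoc F H H H).symm.toLinearMap
    ∘ₗ (TensorProduct.assoc F A H (H ⊗[F] H)).toLinearMap

noncomputable def Th3 : (A ⊗[F] H) ⊗[F] ((A ⊗[F] A) ⊗[F] (H ⊗[F] H)) →ₗ[F] A ⊗[F] H :=
  T1 QH ∘ₗ rTensor H (AC3 QA Ψ)
    ∘ₗ (TensorProduct.assoc F (A ⊗[F] H) (A ⊗[F] A) H).symm.toLinearMap
    ∘ₗ lTensor (A ⊗[F] H) (TensorProduct.comm F H (A ⊗[F] A)).toLinearMap
    ∘ₗ (TensorProduct.assoc F (A ⊗[F] H) H (A ⊗[F] A)).toLinearMap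
    ∘ₗ rTensor (A ⊗[F] A) (In3 QH)
    ∘ₗ (TensorProduct.assoc F (A ⊗[F] H) (H ⊗[F] H) (A ⊗[F] A)).symm.toLinearMap
    ∘ₗ lTensor (A ⊗[F] H) (TensorProduct.comm F (A ⊗[F] A) (H ⊗[F] H)).toLinearMap
    ∘ₗ lTensor (A ⊗[F] H) (TensorProduct.map (rTensor A QA.lam) (rTensor H QH.lam))

variable {QA QH Ψ} in
lemma ML3 (hΨ : IsAComonoidalDL F QH QA Ψ) (t : A ⊗[F] A) (u : H ⊗[F] H) (b : A) (g : H) :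
    wreathMul F QA QH Ψ
        (rTensor (A ⊗[F] H) (wreathMul F QA QH Ψ)
          ((TensorProduct.assoc F (A ⊗[F] H) (A ⊗[F] H) (A ⊗[F] H)).symm
            ((b ⊗ₜ g) ⊗ₜ rTensor (A ⊗[F] H) (wreathLam F QA QH Ψ)
              ((TensorProduct.tensorTensorTensorComm F A A H H) (t ⊗ₜ u)))))
      = Th3 QA QH Ψ ((b ⊗ₜ g) ⊗ₜ (t ⊗ₜ u)) := by
  induction t using TensorProduct.induction_on with
  | zero => simp
  | tmul a₁ a₂ =>
      induction u using TensorProduct.induction_on with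
      | zero => simp
      | tmul h₁ h₂ =>
          simp only [tensorTensorTensorComm_tmul, assoc_symm_tmul, map_tmul, wreathLam,
            lTensor_tmul, rTensor_tmul, coe_comp, Function.comp_apply, LinearEquiv.coe_coe,
            comm_tmul]
          rw [L2z hΨ, W1]
          simp only [Th3, In3, N2, Rm, AC3, T2, coe_comp, Function.comp_apply,
            LinearEquiv.coe_coe, lTensor_tmul, rTensor_tmul, assoc_tmul, assoc_symm_tmul,
            tensorTensorTensorComm_tmul, map_tmul, comm_tmul]
          generalize Ψ (QH.mu (g ⊗ₜ[F] QH.lam h₁) ⊗ₜ[F] QA.lam a₁) = w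
          induction w using TensorProduct.induction_on with
          | zero => simp [T1]
          | tmul x y => simp [T1]
          | add w₁ w₂ hw1 hw2 => simp_all [tmul_add, add_tmul]
      | add u₁ u₂ h1 h2 => simp_all [tmul_add, add_tmul]
  | add t₁ t₂ h1 h2 => simp_all [tmul_add, add_tmul]

variable {QA QH Ψ} in
lemma S2r1 (hΨ : IsAComonoidalDL F QH QA Ψ) (a : A) (u : H ⊗[F] H) (b : A) (g : H) :
    Th3 QA QH Ψ ((b ⊗ₜ g) ⊗ₜ (QA.delta a ⊗ₜ u))
      = QA.eps a • (b ⊗ₜ[F] KH3 QH (g ⊗ₜ u)) := by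
  induction u using TensorProduct.induction_on with
  | zero => simp
  | tmul h₁ h₂ =>
      simp only [Th3, In3, KH3, coe_comp, Function.comp_apply, LinearEquiv.coe_coe,
        lTensor_tmul, rTensor_tmul, assoc_tmul, assoc_symm_tmul, map_tmul, comm_tmul]
      rw [hac3e hΨ]
      simp [T1, smul_tmul', tmul_smul]
  | add u₁ u₂ h1 h2 => simp_all [tmul_add, smul_add]

variable {QA QH Ψ} in
lemma antipode_r1_W (hΨ : IsAComonoidalDL F QH QA Ψ) :
    wreathMul F QA QH Ψ
        ∘ₗ rTensor (A ⊗[F] H) (wreathMul F QA QH Ψ)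
        ∘ₗ (TensorProduct.assoc F (A ⊗[F] H) (A ⊗[F] H) (A ⊗[F] H)).symm.toLinearMap
        ∘ₗ lTensor (A ⊗[F] H) (rTensor (A ⊗[F] H) (wreathLam F QA QH Ψ))
        ∘ₗ lTensor (A ⊗[F] H) (tensorDelta F QA.delta QH.delta)
      = (TensorProduct.rid F (A ⊗[F] H)).toLinearMap
          ∘ₗ lTensor (A ⊗[F] H) (tensorEps F QA.eps QH.eps) := by
  apply TensorProduct.ext'
  intro x y
  induction x using TensorProduct.induction_on with
  | zero => simp
  | tmul b g =>
      induction y using TensorProduct.induction_on with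
      | zero => simp
      | tmul a h =>
          have e1 : tensorDelta F QA.delta QH.delta (a ⊗ₜ[F] h)
              = (TensorProduct.tensorTensorTensorComm F A A H H)
                  (QA.delta a ⊗ₜ QH.delta h) := by simp [tensorDelta]
          simp only [coe_comp, Function.comp_apply, LinearEquiv.coe_coe, lTensor_tmul, e1]
          rw [ML3 hΨ, S2r1 hΨ, hKH3]
          simp [tensorEps, smul_smul, mul_comm]
      | add y₁ y₂ h1 h2 => simp_all [tmul_add]
  | add x₁ x₂ h1 h2 => simp_all [add_tmul]

/-! antipode axiom r2 -/

noncomputable def Th4 : (A ⊗[F] H) ⊗[F] ((A ⊗[F] A) ⊗[F] (H ⊗[F] H)) →ₗ[F] A ⊗[F] H :=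
  T2 QA ∘ₗ lTensor A Ψ ∘ₗ lTensor A (TensorProduct.comm F A H).toLinearMap
    ∘ₗ (TensorProduct.assoc F A A H).toLinearMap
    ∘ₗ TensorProduct.map (lTensor A QA.lam) (KH4 QH)
    ∘ₗ (TensorProduct.tensorTensorTensorComm F A H A (H ⊗[F] H)).toLinearMap
    ∘ₗ rTensor (A ⊗[F] (H ⊗[F] H)) (Rm QA Ψ)
    ∘ₗ (TensorProduct.assoc F (A ⊗[F] H) A (A ⊗[F] (H ⊗[F] H))).symm.toLinearMap
    ∘ₗ lTensor (A ⊗[F] H) (TensorProduct.assoc F A A (H ⊗[F] H)).toLinearMap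

variable {QA QH Ψ} in
lemma ML4 (hΨ : IsAComonoidalDL F QH QA Ψ) (t : A ⊗[F] A) (u : H ⊗[F] H) (b : A) (g : H) :
    wreathMul F QA QH Ψ
        (TensorProduct.map (wreathMul F QA QH Ψ) (wreathLam F QA QH Ψ)
          ((TensorProduct.assoc F (A ⊗[F] H) (A ⊗[F] H) (A ⊗[F] H)).symm
            ((b ⊗ₜ g) ⊗ₜ (TensorProduct.tensorTensorTensorComm F A A H H) (t ⊗ₜ u))))
      = Th4 QA QH Ψ ((b ⊗ₜ g) ⊗ₜ (t ⊗ₜ u)) := by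
  induction t using TensorProduct.induction_on with
  | zero => simp
  | tmul a₁ a₂ =>
      induction u using TensorProduct.induction_on with
      | zero => simp
      | tmul h₁ h₂ =>
          simp only [tensorTensorTensorComm_tmul, assoc_symm_tmul, map_tmul, wreathLam,
            lTensor_tmul, rTensor_tmul, coe_comp, Function.comp_apply, LinearEquiv.coe_coe,
            comm_tmul]
          rw [W2, L2z hΨ]
          simp only [Th4, N2, R2, Rm, KH4, T2, coe_comp, Function.comp_apply,
            LinearEquiv.coe_coe, lTensor_tmul, rTensor_tmul, assoc_tmul, assoc_symm_tmul,
            tensorTensorTensorComm_tmul, map_tmul, comm_tmul]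
          generalize Ψ (g ⊗ₜ[F] a₁) = w
          induction w using TensorProduct.induction_on with
          | zero => simp
          | tmul x y => simp
          | add w₁ w₂ hw1 hw2 => simp_all [tmul_add, add_tmul]
      | add u₁ u₂ h1 h2 => simp_all [tmul_add, add_tmul]
  | add t₁ t₂ h1 h2 => simp_all [tmul_add, add_tmul]

variable {QA QH Ψ} in
lemma S2r2 (t : A ⊗[F] A) (h : H) (b : A) (g : H) :
    Th4 QA QH Ψ ((b ⊗ₜ g) ⊗ₜ (t ⊗ₜ QH.delta h))
      = QH.eps h • AC3 QA Ψ ((b ⊗ₜ g) ⊗ₜ lTensor A QA.lam t) := by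
  induction t using TensorProduct.induction_on with
  | zero => simp
  | tmul a₁ a₂ =>
      simp only [Th4, Rm, AC3, T2, coe_comp, Function.comp_apply, LinearEquiv.coe_coe,
        lTensor_tmul, rTensor_tmul, assoc_tmul, assoc_symm_tmul,
        tensorTensorTensorComm_tmul, map_tmul, comm_tmul]
      generalize Ψ (g ⊗ₜ[F] a₁) = w
      induction w using TensorProduct.induction_on with
      | zero => simp
      | tmul x y =>
          simp only [coe_comp, Function.comp_apply, LinearEquiv.coe_coe, lTensor_tmul,
            rTensor_tmul, assoc_tmul, assoc_symm_tmul, tensorTensorTensorComm_tmul,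
            map_tmul, comm_tmul, hKH4, smul_tmul, tmul_smul, map_smul]
      | add w₁ w₂ hw1 hw2 => simp_all [tmul_add, add_tmul, smul_add]
  | add t₁ t₂ h1 h2 => simp_all [tmul_add, add_tmul, smul_add]

variable {QA QH Ψ} in
lemma antipode_r2_W (hΨ : IsAComonoidalDL F QH QA Ψ) :
    wreathMul F QA QH Ψ
        ∘ₗ TensorProduct.map (wreathMul F QA QH Ψ) (wreathLam F QA QH Ψ)
        ∘ₗ (TensorProduct.assoc F (A ⊗[F] H) (A ⊗[F] H) (A ⊗[F] H)).symm.toLinearMap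
        ∘ₗ lTensor (A ⊗[F] H) (tensorDelta F QA.delta QH.delta)
      = (TensorProduct.rid F (A ⊗[F] H)).toLinearMap
          ∘ₗ lTensor (A ⊗[F] H) (tensorEps F QA.eps QH.eps) := by
  apply TensorProduct.ext'
  intro x y
  induction x using TensorProduct.induction_on with
  | zero => simp
  | tmul b g =>
      induction y using TensorProduct.induction_on with
      | zero => simp
      | tmul a h =>
          have e1 : tensorDelta F QA.delta QH.delta (a ⊗ₜ[F] h)
              = (TensorProduct.tensorTensorTensorComm F A A H H)
                  (QA.delta a ⊗ₜ QH.delta h) := by simp [tensorDelta]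
          simp only [coe_comp, Function.comp_apply, LinearEquiv.coe_coe, lTensor_tmul, e1]
          rw [ML4 hΨ, S2r2, hac4e hΨ]
          simp [tensorEps, smul_smul, mul_comm]
      | add y₁ y₂ h1 h2 => simp_all [tmul_add]
  | add x₁ x₂ h1 h2 => simp_all [add_tmul]

/-! multiplicativity of the coproduct -/

/-- `Sm (a ⊗ ((x⊗y) ⊗ g)) = μA(a⊗x) ⊗ μH(y⊗g)` -/
noncomputable def Sm : A ⊗[F] ((A ⊗[F] H) ⊗[F] H) →ₗ[F] A ⊗[F] H :=
  TensorProduct.map QA.mu QH.mu ∘ₗ (TensorProduct.assoc F A A (H ⊗[F] H)).symm.toLinearMap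
    ∘ₗ lTensor A (TensorProduct.assoc F A H H).toLinearMap

noncomputable def Shf : (A ⊗[F] A) ⊗[F] (((A ⊗[F] H) ⊗[F] (A ⊗[F] H)) ⊗[F] (H ⊗[F] H))
    →ₗ[F] (A ⊗[F] ((A ⊗[F] H) ⊗[F] H)) ⊗[F] (A ⊗[F] ((A ⊗[F] H) ⊗[F] H)) :=
  (TensorProduct.tensorTensorTensorComm F A A ((A ⊗[F] H) ⊗[F] H)
      ((A ⊗[F] H) ⊗[F] H)).toLinearMap
    ∘ₗ lTensor (A ⊗[F] A)
        (TensorProduct.tensorTensorTensorComm F (A ⊗[F] H) (A ⊗[F] H) H H).toLinearMap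

lemma SW (a : A) (w : A ⊗[F] H) (g : H) :
    T1 QH (rTensor H QA.mu ((TensorProduct.assoc F A A H).symm (a ⊗ₜ w)) ⊗ₜ g)
      = Sm QA QH (a ⊗ₜ (w ⊗ₜ g)) := by
  induction w using TensorProduct.induction_on with
  | zero => simp [Sm]
  | tmul x y => simp [T1, Sm]
  | add w₁ w₂ h1 h2 => simp_all [tmul_add, add_tmul]

lemma DM2 (t s : A ⊗[F] A) (r v : H ⊗[F] H) :
    (TensorProduct.tensorTensorTensorComm F A A H H)
        (TensorProduct.map QA.mu QA.mu ((TensorProduct.tensorTensorTensorComm F A A A A)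
            (t ⊗ₜ s))
          ⊗ₜ TensorProduct.map QH.mu QH.mu ((TensorProduct.tensorTensorTensorComm F H H H H)
            (r ⊗ₜ v)))
      = TensorProduct.map (Sm QA QH) (Sm QA QH)
          (Shf (t ⊗ₜ ((TensorProduct.tensorTensorTensorComm F A A H H) (s ⊗ₜ r) ⊗ₜ v))) := by
  induction t using TensorProduct.induction_on with
  | zero => simp
  | tmul a₁ a₂ =>
      induction s using TensorProduct.induction_on with
      | zero => simp
      | tmul x₁ x₂ =>
          induction r using TensorProduct.induction_on with
          | zero => simp
          | tmul y₁ y₂ =>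
              induction v using TensorProduct.induction_on with
              | zero => simp
              | tmul g₁ g₂ => simp [Sm, Shf]
              | add v₁ v₂ h1 h2 => simp_all [tmul_add, add_tmul]
          | add r₁ r₂ h1 h2 => simp_all [tmul_add, add_tmul]
      | add s₁ s₂ h1 h2 => simp_all [tmul_add, add_tmul]
  | add t₁ t₂ h1 h2 => simp_all [tmul_add, add_tmul]

lemma DM1 (a : A) (g : H) (w : A ⊗[F] H) :
    tensorDelta F QA.delta QH.delta (Sm QA QH (a ⊗ₜ (w ⊗ₜ g)))
      = TensorProduct.map (Sm QA QH) (Sm QA QH)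
          (Shf (QA.delta a ⊗ₜ (tensorDelta F QA.delta QH.delta w ⊗ₜ QH.delta g))) := by
  induction w using TensorProduct.induction_on with
  | zero => simp [Sm, tensorDelta]
  | tmul x y =>
      have e2 : Sm QA QH (a ⊗ₜ ((x ⊗ₜ[F] y) ⊗ₜ g)) = QA.mu (a ⊗ₜ x) ⊗ₜ[F] QH.mu (y ⊗ₜ g) := by
        simp [Sm]
      have e3 : tensorDelta F QA.delta QH.delta (x ⊗ₜ[F] y)
          = (TensorProduct.tensorTensorTensorComm F A A H H) (QA.delta x ⊗ₜ QH.delta y) := by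
        simp [tensorDelta]
      rw [e2, e3]
      have e4 : tensorDelta F QA.delta QH.delta (QA.mu (a ⊗ₜ x) ⊗ₜ[F] QH.mu (y ⊗ₜ g))
          = (TensorProduct.tensorTensorTensorComm F A A H H)
              (QA.delta (QA.mu (a ⊗ₜ x)) ⊗ₜ QH.delta (QH.mu (y ⊗ₜ g))) := by
        simp [tensorDelta]
      rw [e4, hdelta_mu, hdelta_mu, DM2]
  | add w₁ w₂ h1 h2 => simp_all [tmul_add, add_tmul]

variable {QA QH Ψ} in
lemma DM5 (t : A ⊗[F] A) (u : H ⊗[F] H) (s : A ⊗[F] A) (v : H ⊗[F] H) :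
    TensorProduct.map (wreathMul F QA QH Ψ) (wreathMul F QA QH Ψ)
        ((TensorProduct.tensorTensorTensorComm F (A ⊗[F] H) (A ⊗[F] H) (A ⊗[F] H)
            (A ⊗[F] H))
          ((TensorProduct.tensorTensorTensorComm F A A H H) (t ⊗ₜ u)
            ⊗ₜ (TensorProduct.tensorTensorTensorComm F A A H H) (s ⊗ₜ v)))
      = TensorProduct.map (Sm QA QH) (Sm QA QH)
          (Shf (t ⊗ₜ (TensorProduct.map Ψ Ψ
              ((TensorProduct.tensorTensorTensorComm F H H A A) (u ⊗ₜ s)) ⊗ₜ v))) := by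
  induction t using TensorProduct.induction_on with
  | zero => simp
  | tmul a₁ a₂ =>
      induction u using TensorProduct.induction_on with
      | zero => simp
      | tmul h₁ h₂ =>
          induction s using TensorProduct.induction_on with
          | zero => simp
          | tmul b₁ b₂ =>
              induction v using TensorProduct.induction_on with
              | zero => simp
              | tmul g₁ g₂ =>
                  simp only [tensorTensorTensorComm_tmul, map_tmul, W1]
                  simp only [Rm, coe_comp, Function.comp_apply, LinearEquiv.coe_coe,
                    assoc_tmul, lTensor_tmul]
                  rw [SW, SW]
                  simp [Shf]
              | add v₁ v₂ h1 h2 => simp_all [tmul_add, add_tmul]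
          | add s₁ s₂ h1 h2 => simp_all [tmul_add, add_tmul]
      | add u₁ u₂ h1 h2 => simp_all [tmul_add, add_tmul]
  | add t₁ t₂ h1 h2 => simp_all [tmul_add, add_tmul]

variable {QA QH Ψ} in
lemma delta_mu_W (hΨ : IsAComonoidalDL F QH QA Ψ) :
    tensorDelta F QA.delta QH.delta ∘ₗ wreathMul F QA QH Ψ
      = TensorProduct.map (wreathMul F QA QH Ψ) (wreathMul F QA QH Ψ)
          ∘ₗ (TensorProduct.tensorTensorTensorComm F (A ⊗[F] H) (A ⊗[F] H) (A ⊗[F] H)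
              (A ⊗[F] H)).toLinearMap
          ∘ₗ TensorProduct.map (tensorDelta F QA.delta QH.delta)
              (tensorDelta F QA.delta QH.delta) := by
  apply TensorProduct.ext'
  intro x y
  induction x using TensorProduct.induction_on with
  | zero => simp
  | tmul a h =>
      induction y using TensorProduct.induction_on with
      | zero => simp
      | tmul b g =>
          have e1 : tensorDelta F QA.delta QH.delta (a ⊗ₜ[F] h)
              = (TensorProduct.tensorTensorTensorComm F A A H H)
                  (QA.delta a ⊗ₜ QH.delta h) := by simp [tensorDelta]
          have e2 : tensorDelta F QA.delta QH.delta (b ⊗ₜ[F] g)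
              = (TensorProduct.tensorTensorTensorComm F A A H H)
                  (QA.delta b ⊗ₜ QH.delta g) := by simp [tensorDelta]
          simp only [coe_comp, Function.comp_apply, LinearEquiv.coe_coe, map_tmul, e1, e2,
            W1]
          simp only [Rm, coe_comp, Function.comp_apply, LinearEquiv.coe_coe, assoc_tmul,
            lTensor_tmul]
          rw [SW, DM1, hcde hΨ, DM5]
      | add y₁ y₂ h1 h2 => simp_all [tmul_add]
  | add x₁ x₂ h1 h2 => simp_all [add_tmul]
end WreathAux


/-- the wreath product `A ⊗_Ψ H` associated to an a-comonoidal distributive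
law `Ψ` of `H` over `A` is a Hopf quasigroup. -/
theorem stmt0_wreath_product_is_HopfQuasigroup
    {F : Type u} [Field F] {H A : Type u}
    [AddCommGroup H] [Module F H] [AddCommGroup A] [Module F A]
    (QA : HopfQG F A) (QH : HopfQG F H) (Ψ : H ⊗[F] A →ₗ[F] A ⊗[F] H)
    (hΨ : IsAComonoidalDL F QH QA Ψ) :
    ∃ Q : HopfQG F (A ⊗[F] H),
      Q.eta = tensorEta F QA.eta QH.eta ∧
      Q.mu = wreathMul F QA QH Ψ ∧
      Q.eps = tensorEps F QA.eps QH.eps ∧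
      Q.delta = tensorDelta F QA.delta QH.delta ∧
      Q.lam = wreathLam F QA QH Ψ := by
  exact ⟨{ eta := tensorEta F QA.eta QH.eta
           mu := wreathMul F QA QH Ψ
           eps := tensorEps F QA.eps QH.eps
           delta := tensorDelta F QA.delta QH.delta
           lam := wreathLam F QA QH Ψ
           mul_one := WreathAux.mul_one_W hΨ
           one_mul := WreathAux.one_mul_W hΨ
           counit_left := WreathAux.counit_left_W QA QH
           counit_right := WreathAux.counit_right_W QA QH
           coassoc := WreathAux.coassoc_W QA QH
           eps_eta := WreathAux.eps_eta_W QA QH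
           eps_mu := WreathAux.eps_mu_W hΨ
           delta_eta := WreathAux.delta_eta_W QA QH
           delta_mu := WreathAux.delta_mu_W hΨ
           antipode_l1 := WreathAux.antipode_l1_W hΨ
           antipode_l2 := WreathAux.antipode_l2_W hΨ
           antipode_r1 := WreathAux.antipode_r1_W hΨ
           antipode_r2 := WreathAux.antipode_r2_W hΨ },
         rfl, rfl, rfl, rfl, rfl⟩
end
end

section
/- Let X be a Hopf quasigroup over a field F and let H, A be Hopf quasigroups equipped with injective Hopf quasigroup morphisms i_H : H → X and i_A : A → X such that X factorizes as X = AH. Then the linear map Ψ = ω_X⁻¹∘θ_X : H⊗A → A⊗H is a comonoidal distributive law of H over A. -/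
open TensorProduct LinearMap

noncomputable section

universe u

section AuxExt
variable {F : Type u} [Field F]
variable {M : Type u} [AddCommGroup M] [Module F M]
variable {N : Type u} [AddCommGroup N] [Module F N]
variable {P : Type u} [AddCommGroup P] [Module F P]
variable {Q : Type u} [AddCommGroup Q] [Module F Q]

theorem ext3r {f g : M ⊗[F] (N ⊗[F] P) →ₗ[F] Q}
    (h : ∀ (m : M) (n : N) (p : P),
      f (m ⊗ₜ[F] (n ⊗ₜ[F] p)) = g (m ⊗ₜ[F] (n ⊗ₜ[F] p))) : f = g := by
  have hs : Function.Surjective ((TensorProduct.assoc F M N P).toLinearMap :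
      (M ⊗[F] N) ⊗[F] P →ₗ[F] M ⊗[F] (N ⊗[F] P)) := (TensorProduct.assoc F M N P).surjective
  rw [← LinearMap.cancel_right hs]
  exact TensorProduct.ext_threefold fun m n p => by simpa using h m n p

end AuxExt

/-- if `X` factorizes as `X = AH` then `Ψ = ω_X⁻¹∘θ_X` is a comonoidal
distributive law of `H` over `A`. -/
theorem stmt1_factorization_gives_comonoidal_distributive_law
    {F : Type u} [Field F] {X H A : Type u}
    [AddCommGroup X] [Module F X] [AddCommGroup H] [Module F H] [AddCommGroup A] [Module F A]
    (QX : HopfQG F X) (QH : HopfQG F H) (QA : HopfQG F A)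
    (iH : H →ₗ[F] X) (iA : A →ₗ[F] X)
    (hiH : Function.Injective iH) (hiA : Function.Injective iA)
    (hmH : IsHopfQGMor F QH QX iH) (hmA : IsHopfQGMor F QA QX iA)
    (hfact : Factorizes F QX QH QA iH iA) :
    IsComonoidalDL F QH QA
      ((LinearEquiv.ofBijective (omegaMap F QX iA iH) hfact.1).symm.toLinearMap
        ∘ₗ thetaMap F QX iH iA) := by
  have hinjw : Function.Injective (omegaMap F QX iA iH) := hfact.1.1
  set e := LinearEquiv.ofBijective (omegaMap F QX iA iH) hfact.1 with he
  set Ψ := e.symm.toLinearMap ∘ₗ thetaMap F QX iH iA with hPsi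
  have hωe : ∀ x, omegaMap F QX iA iH x = e x := fun x => rfl
  have hωψ : ∀ z : H ⊗[F] A, omegaMap F QX iA iH (Ψ z) = thetaMap F QX iH iA z := by
    intro z
    rw [hωe]
    exact e.apply_symm_apply _
  have hcancel : ∀ {M : Type u} [AddCommGroup M] [Module F M] {f g : M →ₗ[F] A ⊗[F] H},
      omegaMap F QX iA iH ∘ₗ f = omegaMap F QX iA iH ∘ₗ g → f = g := by
    intro M _ _ f g hfg
    exact LinearMap.ext fun x => hinjw (LinearMap.congr_fun hfg x)
  have hAmu : ∀ (a b : A), iA (QA.mu (a ⊗ₜ[F] b)) = QX.mu (iA a ⊗ₜ[F] iA b) := by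
    intro a b
    simpa using LinearMap.congr_fun hmA.2.1 (a ⊗ₜ[F] b)
  have hHmu : ∀ (h k : H), iH (QH.mu (h ⊗ₜ[F] k)) = QX.mu (iH h ⊗ₜ[F] iH k) := by
    intro h k
    simpa using LinearMap.congr_fun hmH.2.1 (h ⊗ₜ[F] k)
  have hAeta : iA (QA.eta 1) = QX.eta 1 := LinearMap.congr_fun hmA.1 1
  have hHeta : iH (QH.eta 1) = QX.eta 1 := LinearMap.congr_fun hmH.1 1
  have hAdelta : ∀ a : A, QX.delta (iA a) = TensorProduct.map iA iA (QA.delta a) :=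
    fun a => (LinearMap.congr_fun hmA.2.2.2 a).symm
  have hHdelta : ∀ h : H, QX.delta (iH h) = TensorProduct.map iH iH (QH.delta h) :=
    fun h => (LinearMap.congr_fun hmH.2.2.2 h).symm
  have hAeps : ∀ a : A, QX.eps (iA a) = QA.eps a := fun a => LinearMap.congr_fun hmA.2.2.1 a
  have hHeps : ∀ h : H, QX.eps (iH h) = QH.eps h := fun h => LinearMap.congr_fun hmH.2.2.1 h
  have honel : ∀ x : X, QX.mu (QX.eta 1 ⊗ₜ[F] x) = x := by
    intro x
    simpa [TensorProduct.lid_symm_apply] using LinearMap.congr_fun QX.one_mul x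
  have honer : ∀ x : X, QX.mu (x ⊗ₜ[F] QX.eta 1) = x := by
    intro x
    simpa [TensorProduct.rid_symm_apply] using LinearMap.congr_fun QX.mul_one x
  have hF2p : ∀ (a : A) (h : H) (x : X),
      QX.mu (QX.mu (iA a ⊗ₜ[F] iH h) ⊗ₜ[F] x) = QX.mu (iA a ⊗ₜ[F] QX.mu (iH h ⊗ₜ[F] x)) := by
    intro a h x
    simpa [omegaMap] using LinearMap.congr_fun hfact.2.1 ((a ⊗ₜ[F] h) ⊗ₜ[F] x)
  have hF3p : ∀ (x : X) (a : A) (h : H),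
      QX.mu (x ⊗ₜ[F] QX.mu (iA a ⊗ₜ[F] iH h)) = QX.mu (QX.mu (x ⊗ₜ[F] iA a) ⊗ₜ[F] iH h) := by
    intro x a h
    simpa [omegaMap] using LinearMap.congr_fun hfact.2.2.1 (x ⊗ₜ[F] (a ⊗ₜ[F] h))
  have hF4p : ∀ (h : H) (a : A) (x : X),
      QX.mu (QX.mu (iH (QH.lam h) ⊗ₜ[F] iA (QA.lam a)) ⊗ₜ[F] x)
        = QX.mu (iH (QH.lam h) ⊗ₜ[F] QX.mu (iA (QA.lam a) ⊗ₜ[F] x)) := by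
    intro h a x
    simpa [thetaMap] using LinearMap.congr_fun hfact.2.2.2.1 ((h ⊗ₜ[F] a) ⊗ₜ[F] x)
  have hF5p : ∀ (x : X) (h : H) (a : A),
      QX.mu (x ⊗ₜ[F] QX.mu (iH (QH.lam h) ⊗ₜ[F] iA (QA.lam a)))
        = QX.mu (QX.mu (x ⊗ₜ[F] iH (QH.lam h)) ⊗ₜ[F] iA (QA.lam a)) := by
    intro x h a
    simpa [thetaMap] using LinearMap.congr_fun hfact.2.2.2.2 (x ⊗ₜ[F] (h ⊗ₜ[F] a))
  -- map-level lemmas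
  have hL1 : QX.mu ∘ₗ TensorProduct.map iA (omegaMap F QX iA iH)
      = omegaMap F QX iA iH ∘ₗ rTensor H QA.mu
          ∘ₗ (TensorProduct.assoc F A A H).symm.toLinearMap := by
    apply ext3r
    intro a b h
    simp only [LinearMap.coe_comp, Function.comp_apply, TensorProduct.map_tmul,
      LinearMap.rTensor_tmul, LinearEquiv.coe_coe, TensorProduct.assoc_symm_tmul, omegaMap]
    rw [hAmu, ← hF3p]
  have hL1' : omegaMap F QX iA iH ∘ₗ lTensor A QH.mu
        ∘ₗ (TensorProduct.assoc F A H H).toLinearMap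
      = QX.mu ∘ₗ TensorProduct.map (omegaMap F QX iA iH) iH := by
    apply TensorProduct.ext_threefold
    intro a h k
    simp only [LinearMap.coe_comp, Function.comp_apply, TensorProduct.map_tmul,
      LinearMap.lTensor_tmul, LinearEquiv.coe_coe, TensorProduct.assoc_tmul, omegaMap]
    rw [hHmu, ← hF2p]
  have hRHS1 : omegaMap F QX iA iH ∘ₗ rTensor H QA.mu
        ∘ₗ (TensorProduct.assoc F A A H).symm.toLinearMap ∘ₗ lTensor A Ψ
        ∘ₗ (TensorProduct.assoc F A H A).toLinearMap
      = QX.mu ∘ₗ TensorProduct.map (omegaMap F QX iA iH) iA := by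
    apply TensorProduct.ext_threefold
    intro a h b
    have h1 := LinearMap.congr_fun hL1 (a ⊗ₜ[F] Ψ (h ⊗ₜ[F] b))
    simp only [LinearMap.coe_comp, Function.comp_apply, TensorProduct.map_tmul,
      LinearMap.lTensor_tmul, LinearEquiv.coe_coe, TensorProduct.assoc_tmul] at h1 ⊢
    rw [← h1, hωψ]
    simp only [thetaMap, omegaMap, LinearMap.coe_comp, Function.comp_apply,
      TensorProduct.map_tmul]
    rw [hF2p]
  have hRHS2 : omegaMap F QX iA iH ∘ₗ lTensor A QH.mu
        ∘ₗ (TensorProduct.assoc F A H H).toLinearMap ∘ₗ rTensor H Ψ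
        ∘ₗ (TensorProduct.assoc F H A H).symm.toLinearMap
      = QX.mu ∘ₗ TensorProduct.map iH (omegaMap F QX iA iH) := by
    apply ext3r
    intro h a k
    have h1 := LinearMap.congr_fun hL1' (Ψ (h ⊗ₜ[F] a) ⊗ₜ[F] k)
    simp only [LinearMap.coe_comp, Function.comp_apply, TensorProduct.map_tmul,
      LinearMap.rTensor_tmul, LinearEquiv.coe_coe, TensorProduct.assoc_symm_tmul] at h1 ⊢
    rw [h1, hωψ]
    simp only [thetaMap, omegaMap, LinearMap.coe_comp, Function.comp_apply,
      TensorProduct.map_tmul]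
    rw [← hF3p]
  -- comonoidal auxiliary lemmas
  have hN1 : TensorProduct.map (omegaMap F QX iA iH) (omegaMap F QX iA iH)
        ∘ₗ (TensorProduct.tensorTensorTensorComm F A A H H).toLinearMap
      = TensorProduct.map QX.mu QX.mu
          ∘ₗ (TensorProduct.tensorTensorTensorComm F X X X X).toLinearMap
          ∘ₗ TensorProduct.map (TensorProduct.map iA iA) (TensorProduct.map iH iH) := by
    apply TensorProduct.ext_fourfold'
    intro a b h k
    simp [omegaMap, TensorProduct.tensorTensorTensorComm_tmul]
  have hN2 : TensorProduct.map (thetaMap F QX iH iA) (thetaMap F QX iH iA)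
        ∘ₗ (TensorProduct.tensorTensorTensorComm F H H A A).toLinearMap
      = TensorProduct.map QX.mu QX.mu
          ∘ₗ (TensorProduct.tensorTensorTensorComm F X X X X).toLinearMap
          ∘ₗ TensorProduct.map (TensorProduct.map iH iH) (TensorProduct.map iA iA) := by
    apply TensorProduct.ext_fourfold'
    intro h k a b
    simp [thetaMap, TensorProduct.tensorTensorTensorComm_tmul]
  have hC1 : TensorProduct.map (omegaMap F QX iA iH) (omegaMap F QX iA iH)
        ∘ₗ tensorDelta F QA.delta QH.delta = QX.delta ∘ₗ omegaMap F QX iA iH := by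
    apply TensorProduct.ext'
    intro a h
    have h1 := LinearMap.congr_fun hN1 (QA.delta a ⊗ₜ[F] QH.delta h)
    have h2 := LinearMap.congr_fun QX.delta_mu (iA a ⊗ₜ[F] iH h)
    simp only [tensorDelta, LinearMap.coe_comp, Function.comp_apply, TensorProduct.map_tmul,
      LinearEquiv.coe_coe] at h1 h2 ⊢
    rw [h1, ← hAdelta, ← hHdelta, omegaMap]
    simp only [LinearMap.coe_comp, Function.comp_apply, TensorProduct.map_tmul]
    rw [h2]
  have hC2 : TensorProduct.map (thetaMap F QX iH iA) (thetaMap F QX iH iA)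
        ∘ₗ tensorDelta F QH.delta QA.delta = QX.delta ∘ₗ thetaMap F QX iH iA := by
    apply TensorProduct.ext'
    intro h a
    have h1 := LinearMap.congr_fun hN2 (QH.delta h ⊗ₜ[F] QA.delta a)
    have h2 := LinearMap.congr_fun QX.delta_mu (iH h ⊗ₜ[F] iA a)
    simp only [tensorDelta, LinearMap.coe_comp, Function.comp_apply, TensorProduct.map_tmul,
      LinearEquiv.coe_coe] at h1 h2 ⊢
    rw [h1, ← hAdelta, ← hHdelta, thetaMap]
    simp only [LinearMap.coe_comp, Function.comp_apply, TensorProduct.map_tmul]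
    rw [h2]
  have hωψL : omegaMap F QX iA iH ∘ₗ Ψ = thetaMap F QX iH iA := LinearMap.ext hωψ
  have hMψψ : TensorProduct.map (omegaMap F QX iA iH) (omegaMap F QX iA iH)
        ∘ₗ TensorProduct.map Ψ Ψ
      = TensorProduct.map (thetaMap F QX iH iA) (thetaMap F QX iH iA) := by
    rw [← TensorProduct.map_comp, hωψL]
  have hinj2 : Function.Injective
      ⇑(TensorProduct.map (omegaMap F QX iA iH) (omegaMap F QX iA iH)) := by
    have hcongr : TensorProduct.map (omegaMap F QX iA iH) (omegaMap F QX iA iH)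
        = (TensorProduct.congr e e).toLinearMap := by
      apply TensorProduct.ext'
      intro z w
      simp [TensorProduct.congr_tmul, hωe]
    rw [hcongr]
    exact (TensorProduct.congr e e).injective
  have hE1 : tensorEps F QA.eps QH.eps = QX.eps ∘ₗ omegaMap F QX iA iH := by
    apply TensorProduct.ext'
    intro a h
    have h2 := LinearMap.congr_fun QX.eps_mu (iA a ⊗ₜ[F] iH h)
    simp only [tensorEps, omegaMap, LinearMap.coe_comp, Function.comp_apply,
      TensorProduct.map_tmul, LinearEquiv.coe_coe, TensorProduct.lid_tmul] at h2 ⊢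
    rw [h2, hAeps, hHeps]
  have hE2 : QX.eps ∘ₗ thetaMap F QX iH iA = tensorEps F QH.eps QA.eps := by
    apply TensorProduct.ext'
    intro h a
    have h2 := LinearMap.congr_fun QX.eps_mu (iH h ⊗ₜ[F] iA a)
    simp only [tensorEps, thetaMap, LinearMap.coe_comp, Function.comp_apply,
      TensorProduct.map_tmul, LinearEquiv.coe_coe, TensorProduct.lid_tmul] at h2 ⊢
    rw [h2, hAeps, hHeps]
  refine ⟨⟨?_, ?_, ?_, ?_⟩, ?_, ?_⟩
  · -- first distributive law condition
    apply hcancel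
    apply ext3r
    intro h a b
    have h1 := LinearMap.congr_fun hRHS1 (Ψ (QH.lam h ⊗ₜ[F] QA.lam a) ⊗ₜ[F] b)
    simp only [LinearMap.coe_comp, Function.comp_apply, TensorProduct.map_tmul,
      LinearMap.lTensor_tmul, LinearMap.rTensor_tmul, LinearEquiv.coe_coe,
      TensorProduct.assoc_tmul, TensorProduct.assoc_symm_tmul] at h1 ⊢
    rw [h1, hωψ, hωψ]
    simp only [thetaMap, LinearMap.coe_comp, Function.comp_apply, TensorProduct.map_tmul]
    rw [hAmu, hF4p]
  · -- second distributive law condition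
    apply hcancel
    apply TensorProduct.ext_threefold
    intro h k a
    have h1 := LinearMap.congr_fun hRHS2 (h ⊗ₜ[F] Ψ (QH.lam k ⊗ₜ[F] QA.lam a))
    simp only [LinearMap.coe_comp, Function.comp_apply, TensorProduct.map_tmul,
      LinearMap.lTensor_tmul, LinearMap.rTensor_tmul, LinearEquiv.coe_coe,
      TensorProduct.assoc_tmul, TensorProduct.assoc_symm_tmul] at h1 ⊢
    rw [h1, hωψ, hωψ]
    simp only [thetaMap, LinearMap.coe_comp, Function.comp_apply, TensorProduct.map_tmul]
    rw [hHmu, ← hF5p]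
  · -- unit condition for A
    apply hcancel
    refine LinearMap.ext fun h => ?_
    simp only [LinearMap.coe_comp, Function.comp_apply, LinearEquiv.coe_coe,
      TensorProduct.rid_symm_apply, TensorProduct.lid_symm_apply,
      LinearMap.lTensor_tmul, LinearMap.rTensor_tmul]
    rw [hωψ]
    simp only [thetaMap, omegaMap, LinearMap.coe_comp, Function.comp_apply,
      TensorProduct.map_tmul]
    rw [hAeta, honel, honer]
  · -- unit condition for H
    apply hcancel
    refine LinearMap.ext fun a => ?_
    simp only [LinearMap.coe_comp, Function.comp_apply, LinearEquiv.coe_coe,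
      TensorProduct.rid_symm_apply, TensorProduct.lid_symm_apply,
      LinearMap.lTensor_tmul, LinearMap.rTensor_tmul]
    rw [hωψ]
    simp only [thetaMap, omegaMap, LinearMap.coe_comp, Function.comp_apply,
      TensorProduct.map_tmul]
    rw [hHeta, honel, honer]
  · -- comonoidal: coproduct
    refine LinearMap.ext fun z => hinj2 ?_
    have l1 := LinearMap.congr_fun hC1 (Ψ z)
    have l2 := LinearMap.congr_fun hC2 z
    have l3 := LinearMap.congr_fun hMψψ (tensorDelta F QH.delta QA.delta z)
    simp only [LinearMap.coe_comp, Function.comp_apply] at l1 l2 l3 ⊢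
    rw [l1, hωψ, ← l2, ← l3]
  · -- comonoidal: counit
    refine LinearMap.ext fun z => ?_
    have l1 := LinearMap.congr_fun hE1 (Ψ z)
    have l2 := LinearMap.congr_fun hE2 z
    simp only [LinearMap.coe_comp, Function.comp_apply] at l1 l2 ⊢
    rw [l1, hωψ, ← l2]
end
end

section
/- Let X be a Hopf quasigroup over a field F and let H, A be Hopf quasigroups whose antipodes λ_H and λ_A are bijective, equipped with injective Hopf quasigroup morphisms i_H : H → X and i_A : A → X such that X factorizes as X = AH. Then Ψ = ω_X⁻¹∘θ_X : H⊗A → A⊗H is an a-comonoidal distributive law of H over A. -/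
open TensorProduct LinearMap

noncomputable section

universe u

section Aux

variable {F : Type u} [Field F] {X H A : Type u}
    [AddCommGroup X] [Module F X] [AddCommGroup H] [Module F H] [AddCommGroup A] [Module F A]

namespace HopfQG

variable (Q : HopfQG F H)

lemma one_mul' (x : H) : Q.mu (Q.eta 1 ⊗ₜ[F] x) = x := by
  simpa using LinearMap.congr_fun Q.one_mul x

lemma mul_one' (x : H) : Q.mu (x ⊗ₜ[F] Q.eta 1) = x := by
  simpa using LinearMap.congr_fun Q.mul_one x

lemma counit_left' (h : H) :
    (TensorProduct.lid F H) (rTensor H Q.eps (Q.delta h)) = h := by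
  simpa using LinearMap.congr_fun Q.counit_left h

lemma counit_right' (h : H) :
    (TensorProduct.rid F H) (lTensor H Q.eps (Q.delta h)) = h := by
  simpa using LinearMap.congr_fun Q.counit_right h

/-- `id * λ = η∘ε` elementwise. -/
lemma idmullam (h : H) :
    Q.mu (lTensor H Q.lam (Q.delta h)) = Q.eps h • Q.eta 1 := by
  have key : ∀ t : H ⊗[F] H,
      Q.mu (TensorProduct.map Q.mu Q.lam
        ((TensorProduct.assoc F H H H).symm (Q.eta 1 ⊗ₜ[F] t)))
      = Q.mu (lTensor H Q.lam t) := by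
    intro t
    induction t using TensorProduct.induction_on with
    | zero => simp
    | tmul u v => simp [TensorProduct.assoc_symm_tmul, Q.one_mul']
    | add x y hx hy => simp [TensorProduct.tmul_add, hx, hy]
  have hr2 := LinearMap.congr_fun Q.antipode_r2 (Q.eta 1 ⊗ₜ[F] h)
  simp only [LinearMap.comp_apply, lTensor_tmul, LinearEquiv.coe_coe] at hr2
  rw [key (Q.delta h)] at hr2
  simpa [TensorProduct.smul_tmul', Q.mul_one'] using hr2

end HopfQG

end Aux
section Aux2

variable {F : Type u} [Field F] {X H A : Type u}
    [AddCommGroup X] [Module F X] [AddCommGroup H] [Module F H] [AddCommGroup A] [Module F A]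

lemma mor_eta (QX : HopfQG F X) (Q : HopfQG F H) (i : H →ₗ[F] X)
    (hm : IsHopfQGMor F Q QX i) : i (Q.eta 1) = QX.eta 1 :=
  LinearMap.congr_fun hm.1 1

lemma mor_mul (QX : HopfQG F X) (Q : HopfQG F H) (i : H →ₗ[F] X)
    (hm : IsHopfQGMor F Q QX i) (t : H ⊗[F] H) :
    i (Q.mu t) = QX.mu (TensorProduct.map i i t) :=
  LinearMap.congr_fun hm.2.1 t

lemma mor_eps (QX : HopfQG F X) (Q : HopfQG F H) (i : H →ₗ[F] X)
    (hm : IsHopfQGMor F Q QX i) (h : H) : QX.eps (i h) = Q.eps h :=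
  LinearMap.congr_fun hm.2.2.1 h

lemma mor_delta (QX : HopfQG F X) (Q : HopfQG F H) (i : H →ₗ[F] X)
    (hm : IsHopfQGMor F Q QX i) (h : H) :
    QX.delta (i h) = TensorProduct.map i i (Q.delta h) :=
  (LinearMap.congr_fun hm.2.2.2 h).symm

/-- Hopf quasigroup morphisms commute with antipodes. -/
lemma lam_comm (QX : HopfQG F X) (Q : HopfQG F H) (i : H →ₗ[F] X)
    (hm : IsHopfQGMor F Q QX i) (h : H) : QX.lam (i h) = i (Q.lam h) := by
  set G : (H ⊗[F] H) ⊗[F] H →ₗ[F] X :=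
    QX.mu ∘ₗ TensorProduct.map QX.lam QX.mu ∘ₗ (TensorProduct.assoc F X X X).toLinearMap
      ∘ₗ TensorProduct.map (TensorProduct.map i i) (i ∘ₗ Q.lam) with hG
  have claim1 : ∀ t : H ⊗[F] H,
      G (rTensor H Q.delta t)
        = i (Q.lam ((TensorProduct.lid F H) (rTensor H Q.eps t))) := by
    intro t
    induction t using TensorProduct.induction_on with
    | zero => simp
    | tmul h1 h3 =>
      have hl1 := LinearMap.congr_fun QX.antipode_l1 (i h1 ⊗ₜ[F] (i (Q.lam h3)))
      simp only [LinearMap.comp_apply, rTensor_tmul, LinearEquiv.coe_coe,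
        TensorProduct.lid_tmul] at hl1
      simp only [hG, LinearMap.comp_apply, rTensor_tmul, TensorProduct.map_tmul,
        LinearEquiv.coe_coe, LinearMap.comp_apply]
      rw [← mor_delta QX Q i hm h1] at *
      rw [hl1, mor_eps QX Q i hm, TensorProduct.lid_tmul, map_smul, map_smul]
    | add x y hx hy => simp [map_add, hx, hy]
  have claim2 : ∀ t : H ⊗[F] H,
      G ((TensorProduct.assoc F H H H).symm (lTensor H Q.delta t))
        = QX.lam (i ((TensorProduct.rid F H) (lTensor H Q.eps t))) := by
    have sub : ∀ (h1 : H) (s : H ⊗[F] H),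
        G ((TensorProduct.assoc F H H H).symm (h1 ⊗ₜ[F] s))
          = QX.mu (QX.lam (i h1) ⊗ₜ[F] i (Q.mu (lTensor H Q.lam s))) := by
      intro h1 s
      induction s using TensorProduct.induction_on with
      | zero => simp
      | tmul u v =>
        simp only [hG, TensorProduct.assoc_symm_tmul, LinearMap.comp_apply,
          TensorProduct.map_tmul, LinearEquiv.coe_coe, TensorProduct.assoc_tmul,
          lTensor_tmul]
        rw [mor_mul QX Q i hm, TensorProduct.map_tmul]
      | add x y hx hy => simp [TensorProduct.tmul_add, map_add, hx, hy]
    intro t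
    induction t using TensorProduct.induction_on with
    | zero => simp
    | tmul h1 h2 =>
      simp only [lTensor_tmul, sub, HopfQG.idmullam, TensorProduct.rid_tmul]
      rw [map_smul, mor_eta QX Q i hm, map_smul, map_smul, TensorProduct.tmul_smul, map_smul, QX.mul_one']
    | add x y hx hy => simp [map_add, hx, hy]
  have hco := LinearMap.congr_fun Q.coassoc h
  simp only [LinearMap.comp_apply, LinearEquiv.coe_coe] at hco
  have hco' : rTensor H Q.delta (Q.delta h)
      = (TensorProduct.assoc F H H H).symm (lTensor H Q.delta (Q.delta h)) := by
    rw [← hco, LinearEquiv.symm_apply_apply]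
  have e1 := claim1 (Q.delta h)
  rw [hco', claim2 (Q.delta h), Q.counit_left' h, Q.counit_right' h] at e1
  exact e1

end Aux2
section Aux3

variable {F : Type u} [Field F] {X H A : Type u}
    [AddCommGroup X] [Module F X] [AddCommGroup H] [Module F H] [AddCommGroup A] [Module F A]
    {QX : HopfQG F X} {QH : HopfQG F H} {QA : HopfQG F A}
    {iH : H →ₗ[F] X} {iA : A →ₗ[F] X}

lemma omega_tmul (a : A) (h : H) :
    omegaMap F QX iA iH (a ⊗ₜ[F] h) = QX.mu (iA a ⊗ₜ[F] iH h) := rfl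

lemma theta_tmul (h : H) (a : A) :
    thetaMap F QX iH iA (h ⊗ₜ[F] a) = QX.mu (iH h ⊗ₜ[F] iA a) := rfl

lemma F2e (hfact : Factorizes F QX QH QA iH iA) (a : A) (h : H) (x : X) :
    QX.mu (omegaMap F QX iA iH (a ⊗ₜ[F] h) ⊗ₜ[F] x)
      = QX.mu (iA a ⊗ₜ[F] QX.mu (iH h ⊗ₜ[F] x)) := by
  have := LinearMap.congr_fun hfact.2.1 ((a ⊗ₜ[F] h) ⊗ₜ[F] x)
  simpa using this

lemma F3e (hfact : Factorizes F QX QH QA iH iA) (x : X) (a : A) (h : H) :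
    QX.mu (x ⊗ₜ[F] omegaMap F QX iA iH (a ⊗ₜ[F] h))
      = QX.mu (QX.mu (x ⊗ₜ[F] iA a) ⊗ₜ[F] iH h) := by
  have := LinearMap.congr_fun hfact.2.2.1 (x ⊗ₜ[F] (a ⊗ₜ[F] h))
  simpa using this

lemma F4e (hlamH : Function.Bijective QH.lam) (hlamA : Function.Bijective QA.lam)
    (hfact : Factorizes F QX QH QA iH iA) (h : H) (a : A) (x : X) :
    QX.mu (QX.mu (iH h ⊗ₜ[F] iA a) ⊗ₜ[F] x)
      = QX.mu (iH h ⊗ₜ[F] QX.mu (iA a ⊗ₜ[F] x)) := by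
  obtain ⟨h0, rfl⟩ := hlamH.2 h
  obtain ⟨a0, rfl⟩ := hlamA.2 a
  have := LinearMap.congr_fun hfact.2.2.2.1 ((h0 ⊗ₜ[F] a0) ⊗ₜ[F] x)
  simpa [thetaMap] using this

lemma F5e (hlamH : Function.Bijective QH.lam) (hlamA : Function.Bijective QA.lam)
    (hfact : Factorizes F QX QH QA iH iA) (x : X) (h : H) (a : A) :
    QX.mu (x ⊗ₜ[F] QX.mu (iH h ⊗ₜ[F] iA a))
      = QX.mu (QX.mu (x ⊗ₜ[F] iH h) ⊗ₜ[F] iA a) := by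
  obtain ⟨h0, rfl⟩ := hlamH.2 h
  obtain ⟨a0, rfl⟩ := hlamA.2 a
  have := LinearMap.congr_fun hfact.2.2.2.2 (x ⊗ₜ[F] (h0 ⊗ₜ[F] a0))
  simpa [thetaMap] using this

lemma omega_psi (hfact : Factorizes F QX QH QA iH iA) (u : H ⊗[F] A) :
    omegaMap F QX iA iH
      (((LinearEquiv.ofBijective (omegaMap F QX iA iH) hfact.1).symm.toLinearMap
        ∘ₗ thetaMap F QX iH iA) u) = thetaMap F QX iH iA u := by
  simp only [LinearMap.comp_apply, LinearEquiv.coe_coe]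
  exact (LinearEquiv.ofBijective (omegaMap F QX iA iH) hfact.1).apply_symm_apply _

end Aux3
section Aux4

variable {F : Type u} [Field F] {X H A : Type u}
    [AddCommGroup X] [Module F X] [AddCommGroup H] [Module F H] [AddCommGroup A] [Module F A]
    {QX : HopfQG F X} {QH : HopfQG F H} {QA : HopfQG F A}
    {iH : H →ₗ[F] X} {iA : A →ₗ[F] X} {Ψ : H ⊗[F] A →ₗ[F] A ⊗[F] H}

/-- `ω(a ⊗ (c·k)) = iA a · ω(c⊗k)` for general `s = c⊗k`. -/
lemma M0 (hfact : Factorizes F QX QH QA iH iA) (hmA : IsHopfQGMor F QA QX iA)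
    (z : A) (s : A ⊗[F] H) :
    omegaMap F QX iA iH (rTensor H QA.mu ((TensorProduct.assoc F A A H).symm (z ⊗ₜ[F] s)))
      = QX.mu (iA z ⊗ₜ[F] omegaMap F QX iA iH s) := by
  induction s using TensorProduct.induction_on with
  | zero => simp
  | tmul d k =>
    simp only [TensorProduct.assoc_symm_tmul, rTensor_tmul, omega_tmul]
    rw [mor_mul QX QA iA hmA, TensorProduct.map_tmul, ← F3e hfact]
    rfl
  | add x y hx hy => simp only [TensorProduct.tmul_add, map_add, hx, hy]

/-- `ω((b⊗g)·z-leg) = ω(b⊗g) · iH z`. -/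
lemma R0e (hfact : Factorizes F QX QH QA iH iA) (hmH : IsHopfQGMor F QH QX iH)
    (s : A ⊗[F] H) (z : H) :
    omegaMap F QX iA iH (lTensor A QH.mu ((TensorProduct.assoc F A H H) (s ⊗ₜ[F] z)))
      = QX.mu (omegaMap F QX iA iH s ⊗ₜ[F] iH z) := by
  induction s using TensorProduct.induction_on with
  | zero => simp
  | tmul b g =>
    simp only [TensorProduct.assoc_tmul, lTensor_tmul, omega_tmul]
    rw [mor_mul QX QH iH hmH, TensorProduct.map_tmul, ← F2e hfact]
    rfl
  | add x y hx hy => simp only [TensorProduct.add_tmul, map_add, hx, hy]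

lemma DLB1 (hfact : Factorizes F QX QH QA iH iA) (hmA : IsHopfQGMor F QA QX iA)
    (hψ : ∀ u, omegaMap F QX iA iH (Ψ u) = thetaMap F QX iH iA u)
    (s : A ⊗[F] H) (a' : A) :
    omegaMap F QX iA iH (rTensor H QA.mu ((TensorProduct.assoc F A A H).symm
        (lTensor A Ψ ((TensorProduct.assoc F A H A) (s ⊗ₜ[F] a')))))
      = QX.mu (omegaMap F QX iA iH s ⊗ₜ[F] iA a') := by
  induction s using TensorProduct.induction_on with
  | zero => simp
  | tmul b g =>
    simp only [TensorProduct.assoc_tmul, lTensor_tmul]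
    rw [M0 hfact hmA, hψ, theta_tmul, ← F2e hfact]
  | add x y hx hy => simp only [TensorProduct.add_tmul, map_add, hx, hy]

lemma DLB2 (hfact : Factorizes F QX QH QA iH iA) (hmH : IsHopfQGMor F QH QX iH)
    (hψ : ∀ u, omegaMap F QX iA iH (Ψ u) = thetaMap F QX iH iA u)
    (h : H) (s : A ⊗[F] H) :
    omegaMap F QX iA iH (lTensor A QH.mu ((TensorProduct.assoc F A H H)
        (rTensor H Ψ ((TensorProduct.assoc F H A H).symm (h ⊗ₜ[F] s)))))
      = QX.mu (iH h ⊗ₜ[F] omegaMap F QX iA iH s) := by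
  induction s using TensorProduct.induction_on with
  | zero => simp
  | tmul b g =>
    simp only [TensorProduct.assoc_symm_tmul, rTensor_tmul]
    rw [R0e hfact hmH, hψ, theta_tmul, ← F3e hfact]
  | add x y hx hy => simp only [TensorProduct.tmul_add, map_add, hx, hy]

end Aux4
section Aux5

variable {F : Type u} [Field F] {X H A : Type u}
    [AddCommGroup X] [Module F X] [AddCommGroup H] [Module F H] [AddCommGroup A] [Module F A]

/-- `(g⊗g')⊗y ↦ iH g · (iH g' · y)`. -/
def C0 (QX : HopfQG F X) (iH : H →ₗ[F] X) : (H ⊗[F] H) ⊗[F] X →ₗ[F] X :=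
  QX.mu ∘ₗ TensorProduct.map iH (QX.mu ∘ₗ rTensor X iH)
    ∘ₗ (TensorProduct.assoc F H H X).toLinearMap

/-- `y⊗(c⊗c') ↦ (y · iA c) · iA c'`. -/
def C0' (QX : HopfQG F X) (iA : A →ₗ[F] X) : X ⊗[F] (A ⊗[F] A) →ₗ[F] X :=
  QX.mu ∘ₗ TensorProduct.map (QX.mu ∘ₗ lTensor X iA) iA
    ∘ₗ (TensorProduct.assoc F X A A).symm.toLinearMap

variable {QX : HopfQG F X} {QH : HopfQG F H} {QA : HopfQG F A}
    {iH : H →ₗ[F] X} {iA : A →ₗ[F] X} {Ψ : H ⊗[F] A →ₗ[F] A ⊗[F] H}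

lemma C0_tmul (g g' : H) (y : X) :
    C0 QX iH ((g ⊗ₜ[F] g') ⊗ₜ[F] y) = QX.mu (iH g ⊗ₜ[F] QX.mu (iH g' ⊗ₜ[F] y)) := by
  simp [C0, TensorProduct.assoc_tmul]

lemma C0'_tmul (y : X) (c c' : A) :
    C0' QX iA (y ⊗ₜ[F] (c ⊗ₜ[F] c')) = QX.mu (QX.mu (y ⊗ₜ[F] iA c) ⊗ₜ[F] iA c') := by
  simp [C0', TensorProduct.assoc_symm_tmul]

lemma B1' (hlamH : Function.Bijective QH.lam) (hlamA : Function.Bijective QA.lam)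
    (hfact : Factorizes F QX QH QA iH iA)
    (hmH : IsHopfQGMor F QH QX iH)
    (hψ : ∀ u, omegaMap F QX iA iH (Ψ u) = thetaMap F QX iH iA u)
    (g : H) (s : A ⊗[F] H) (k : H) :
    omegaMap F QX iA iH (lTensor A QH.mu ((TensorProduct.assoc F A H H)
        (TensorProduct.map Ψ QH.mu ((TensorProduct.assoc F H A (H ⊗[F] H)).symm
          (g ⊗ₜ[F] (TensorProduct.assoc F A H H) (s ⊗ₜ[F] k))))))
      = QX.mu (iH g ⊗ₜ[F] QX.mu (omegaMap F QX iA iH s ⊗ₜ[F] iH k)) := by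
  induction s using TensorProduct.induction_on with
  | zero => simp
  | tmul b g'' =>
    simp only [TensorProduct.assoc_tmul, TensorProduct.assoc_symm_tmul,
      TensorProduct.map_tmul]
    rw [R0e hfact hmH, hψ, theta_tmul, mor_mul QX QH iH hmH, TensorProduct.map_tmul,
      F4e hlamH hlamA hfact, ← F2e hfact]
  | add x y hx hy => simp only [TensorProduct.tmul_add, TensorProduct.add_tmul, map_add, hx, hy]

lemma B1 (hlamH : Function.Bijective QH.lam) (hlamA : Function.Bijective QA.lam)
    (hfact : Factorizes F QX QH QA iH iA)
    (hmH : IsHopfQGMor F QH QX iH)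
    (hψ : ∀ u, omegaMap F QX iA iH (Ψ u) = thetaMap F QX iH iA u)
    (t : H ⊗[F] H) (a : A) (k : H) :
    omegaMap F QX iA iH (lTensor A QH.mu ((TensorProduct.assoc F A H H)
        (TensorProduct.map Ψ QH.mu ((TensorProduct.assoc F H A (H ⊗[F] H)).symm
          (lTensor H (TensorProduct.assoc F A H H).toLinearMap
            (lTensor H (rTensor H Ψ)
              (lTensor H (TensorProduct.assoc F H A H).symm.toLinearMap
                ((TensorProduct.assoc F H H (A ⊗[F] H)) (t ⊗ₜ[F] (a ⊗ₜ[F] k))))))))))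
      = C0 QX iH (t ⊗ₜ[F] omegaMap F QX iA iH (a ⊗ₜ[F] k)) := by
  induction t using TensorProduct.induction_on with
  | zero => simp
  | tmul g g' =>
    simp only [TensorProduct.assoc_tmul, TensorProduct.assoc_symm_tmul, lTensor_tmul,
      rTensor_tmul, LinearEquiv.coe_coe]
    rw [B1' hlamH hlamA hfact hmH hψ, hψ, theta_tmul, C0_tmul, ← F3e hfact]
  | add x y hx hy => simp only [TensorProduct.add_tmul, map_add, hx, hy]

lemma B3mid (hlamH : Function.Bijective QH.lam) (hlamA : Function.Bijective QA.lam)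
    (hfact : Factorizes F QX QH QA iH iA)
    (hmA : IsHopfQGMor F QA QX iA)
    (hψ : ∀ u, omegaMap F QX iA iH (Ψ u) = thetaMap F QX iH iA u)
    (a : A) (s : A ⊗[F] H) (c2 : A) :
    omegaMap F QX iA iH (rTensor H QA.mu ((TensorProduct.assoc F A A H).symm
        (TensorProduct.map QA.mu Ψ ((TensorProduct.assoc F A A (H ⊗[F] A)).symm
          (a ⊗ₜ[F] (TensorProduct.assoc F A H A) (s ⊗ₜ[F] c2))))))
      = QX.mu (QX.mu (iA a ⊗ₜ[F] omegaMap F QX iA iH s) ⊗ₜ[F] iA c2) := by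
  induction s using TensorProduct.induction_on with
  | zero => simp
  | tmul b g =>
    simp only [TensorProduct.assoc_tmul, TensorProduct.assoc_symm_tmul,
      TensorProduct.map_tmul]
    rw [M0 hfact hmA, hψ, theta_tmul, mor_mul QX QA iA hmA, TensorProduct.map_tmul,
      F5e hlamH hlamA hfact, ← F3e hfact]
  | add x y hx hy => simp only [TensorProduct.tmul_add, TensorProduct.add_tmul, map_add, hx, hy]

lemma B3 (hlamH : Function.Bijective QH.lam) (hlamA : Function.Bijective QA.lam)
    (hfact : Factorizes F QX QH QA iH iA)
    (hmA : IsHopfQGMor F QA QX iA)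
    (hψ : ∀ u, omegaMap F QX iA iH (Ψ u) = thetaMap F QX iH iA u)
    (a : A) (h : H) (t : A ⊗[F] A) :
    omegaMap F QX iA iH (rTensor H QA.mu ((TensorProduct.assoc F A A H).symm
        (TensorProduct.map QA.mu Ψ ((TensorProduct.assoc F A A (H ⊗[F] A)).symm
          (lTensor A (TensorProduct.assoc F A H A).toLinearMap
            (lTensor A (rTensor A Ψ)
              (lTensor A (TensorProduct.assoc F H A A).symm.toLinearMap
                ((TensorProduct.assoc F A H (A ⊗[F] A)) ((a ⊗ₜ[F] h) ⊗ₜ[F] t)))))))))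
      = C0' QX iA (omegaMap F QX iA iH (a ⊗ₜ[F] h) ⊗ₜ[F] t) := by
  induction t using TensorProduct.induction_on with
  | zero => simp
  | tmul c1 c2 =>
    simp only [TensorProduct.assoc_tmul, TensorProduct.assoc_symm_tmul, lTensor_tmul,
      rTensor_tmul, LinearEquiv.coe_coe]
    rw [B3mid hlamH hlamA hfact hmA hψ, hψ, theta_tmul, C0'_tmul, F5e hlamH hlamA hfact, omega_tmul]
  | add x y hx hy => simp only [TensorProduct.tmul_add, map_add, hx, hy]

end Aux5
section Aux6

variable {F : Type u} [Field F] {X H A : Type u}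
    [AddCommGroup X] [Module F X] [AddCommGroup H] [Module F H] [AddCommGroup A] [Module F A]
    {QX : HopfQG F X} {QH : HopfQG F H} {QA : HopfQG F A}
    {iH : H →ₗ[F] X} {iA : A →ₗ[F] X}

lemma XL1f (hmH : IsHopfQGMor F QH QX iH) (h : H) (y : X) :
    C0 QX iH ((rTensor H QH.lam (QH.delta h)) ⊗ₜ[F] y) = QH.eps h • y := by
  have bridge : ∀ t : H ⊗[F] H,
      C0 QX iH ((rTensor H QH.lam t) ⊗ₜ[F] y)
        = QX.mu (TensorProduct.map QX.lam QX.mu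
            ((TensorProduct.assoc F X X X) ((TensorProduct.map iH iH t) ⊗ₜ[F] y))) := by
    intro t
    induction t using TensorProduct.induction_on with
    | zero => simp
    | tmul h1 h2 =>
      simp only [rTensor_tmul, TensorProduct.map_tmul, C0_tmul,
        TensorProduct.assoc_tmul, lam_comm QX QH iH hmH]
    | add x y hx hy => simp only [map_add, TensorProduct.add_tmul, hx, hy]
  rw [bridge, ← mor_delta QX QH iH hmH]
  have := LinearMap.congr_fun QX.antipode_l1 (iH h ⊗ₜ[F] y)
  simp only [LinearMap.comp_apply, rTensor_tmul, LinearEquiv.coe_coe,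
    TensorProduct.lid_tmul, mor_eps QX QH iH hmH] at this
  exact this

lemma XL2f (hmH : IsHopfQGMor F QH QX iH) (h : H) (y : X) :
    C0 QX iH ((lTensor H QH.lam (QH.delta h)) ⊗ₜ[F] y) = QH.eps h • y := by
  have bridge : ∀ t : H ⊗[F] H,
      C0 QX iH ((lTensor H QH.lam t) ⊗ₜ[F] y)
        = QX.mu (lTensor X QX.mu (lTensor X (rTensor X QX.lam)
            ((TensorProduct.assoc F X X X) ((TensorProduct.map iH iH t) ⊗ₜ[F] y)))) := by
    intro t
    induction t using TensorProduct.induction_on with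
    | zero => simp
    | tmul h1 h2 =>
      simp only [lTensor_tmul, rTensor_tmul, TensorProduct.map_tmul, C0_tmul,
        TensorProduct.assoc_tmul, lam_comm QX QH iH hmH]
    | add x y hx hy => simp only [map_add, TensorProduct.add_tmul, hx, hy]
  rw [bridge, ← mor_delta QX QH iH hmH]
  have := LinearMap.congr_fun QX.antipode_l2 (iH h ⊗ₜ[F] y)
  simp only [LinearMap.comp_apply, rTensor_tmul, LinearEquiv.coe_coe,
    TensorProduct.lid_tmul, mor_eps QX QH iH hmH] at this
  exact this

lemma XR1f (hmA : IsHopfQGMor F QA QX iA) (c : A) (y : X) :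
    C0' QX iA (y ⊗ₜ[F] (rTensor A QA.lam (QA.delta c))) = QA.eps c • y := by
  have bridge : ∀ t : A ⊗[F] A,
      C0' QX iA (y ⊗ₜ[F] (rTensor A QA.lam t))
        = QX.mu (rTensor X QX.mu ((TensorProduct.assoc F X X X).symm
            (lTensor X (rTensor X QX.lam) (y ⊗ₜ[F] (TensorProduct.map iA iA t))))) := by
    intro t
    induction t using TensorProduct.induction_on with
    | zero => simp
    | tmul c1 c2 =>
      simp only [rTensor_tmul, lTensor_tmul, TensorProduct.map_tmul, C0'_tmul,
        TensorProduct.assoc_symm_tmul, lam_comm QX QA iA hmA]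
    | add x y hx hy => simp only [map_add, TensorProduct.tmul_add, hx, hy]
  rw [bridge, ← mor_delta QX QA iA hmA]
  have := LinearMap.congr_fun QX.antipode_r1 (y ⊗ₜ[F] iA c)
  simp only [LinearMap.comp_apply, lTensor_tmul, LinearEquiv.coe_coe,
    TensorProduct.rid_tmul, mor_eps QX QA iA hmA] at this
  exact this

lemma XR2f (hmA : IsHopfQGMor F QA QX iA) (c : A) (y : X) :
    C0' QX iA (y ⊗ₜ[F] (lTensor A QA.lam (QA.delta c))) = QA.eps c • y := by
  have bridge : ∀ t : A ⊗[F] A,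
      C0' QX iA (y ⊗ₜ[F] (lTensor A QA.lam t))
        = QX.mu (TensorProduct.map QX.mu QX.lam ((TensorProduct.assoc F X X X).symm
            (y ⊗ₜ[F] (TensorProduct.map iA iA t)))) := by
    intro t
    induction t using TensorProduct.induction_on with
    | zero => simp
    | tmul c1 c2 =>
      simp only [lTensor_tmul, TensorProduct.map_tmul, C0'_tmul,
        TensorProduct.assoc_symm_tmul, lam_comm QX QA iA hmA]
    | add x y hx hy => simp only [map_add, TensorProduct.tmul_add, hx, hy]
  rw [bridge, ← mor_delta QX QA iA hmA]
  have := LinearMap.congr_fun QX.antipode_r2 (y ⊗ₜ[F] iA c)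
  simp only [LinearMap.comp_apply, lTensor_tmul, LinearEquiv.coe_coe,
    TensorProduct.rid_tmul, mor_eps QX QA iA hmA] at this
  exact this

end Aux6
section Aux7

variable {F : Type u} [Field F] {X H A : Type u}
    [AddCommGroup X] [Module F X] [AddCommGroup H] [Module F H] [AddCommGroup A] [Module F A]
    {QX : HopfQG F X} {QH : HopfQG F H} {QA : HopfQG F A}
    {iH : H →ₗ[F] X} {iA : A →ₗ[F] X}

lemma D1b (u : A ⊗[F] A) (v : H ⊗[F] H) :
    TensorProduct.map (omegaMap F QX iA iH) (omegaMap F QX iA iH)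
        ((TensorProduct.tensorTensorTensorComm F A A H H) (u ⊗ₜ[F] v))
      = TensorProduct.map QX.mu QX.mu ((TensorProduct.tensorTensorTensorComm F X X X X)
          ((TensorProduct.map iA iA u) ⊗ₜ[F] (TensorProduct.map iH iH v))) := by
  induction u using TensorProduct.induction_on with
  | zero => simp
  | tmul a1 a2 =>
    induction v using TensorProduct.induction_on with
    | zero => simp
    | tmul h1 h2 =>
      simp [TensorProduct.tensorTensorTensorComm_tmul, omega_tmul]
    | add x y hx hy => simp only [TensorProduct.tmul_add, map_add, hx, hy]
  | add x y hx hy => simp only [TensorProduct.add_tmul, map_add, hx, hy]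

lemma D2b (u : H ⊗[F] H) (v : A ⊗[F] A) :
    TensorProduct.map (thetaMap F QX iH iA) (thetaMap F QX iH iA)
        ((TensorProduct.tensorTensorTensorComm F H H A A) (u ⊗ₜ[F] v))
      = TensorProduct.map QX.mu QX.mu ((TensorProduct.tensorTensorTensorComm F X X X X)
          ((TensorProduct.map iH iH u) ⊗ₜ[F] (TensorProduct.map iA iA v))) := by
  induction u using TensorProduct.induction_on with
  | zero => simp
  | tmul h1 h2 =>
    induction v using TensorProduct.induction_on with
    | zero => simp
    | tmul a1 a2 =>
      simp [TensorProduct.tensorTensorTensorComm_tmul, theta_tmul]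
    | add x y hx hy => simp only [TensorProduct.tmul_add, map_add, hx, hy]
  | add x y hx hy => simp only [TensorProduct.add_tmul, map_add, hx, hy]

lemma D1e (hmH : IsHopfQGMor F QH QX iH) (hmA : IsHopfQGMor F QA QX iA)
    (w : A ⊗[F] H) :
    TensorProduct.map (omegaMap F QX iA iH) (omegaMap F QX iA iH)
        (tensorDelta F QA.delta QH.delta w)
      = QX.delta (omegaMap F QX iA iH w) := by
  induction w using TensorProduct.induction_on with
  | zero => simp
  | tmul a h =>
    have hdm := LinearMap.congr_fun QX.delta_mu (iA a ⊗ₜ[F] iH h)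
    simp only [LinearMap.comp_apply, TensorProduct.map_tmul, LinearEquiv.coe_coe] at hdm
    simp only [tensorDelta, LinearMap.comp_apply, TensorProduct.map_tmul,
      LinearEquiv.coe_coe, omega_tmul, hdm, D1b, mor_delta QX QH iH hmH,
      mor_delta QX QA iA hmA]
  | add x y hx hy => simp only [map_add, hx, hy]

lemma D2e (hmH : IsHopfQGMor F QH QX iH) (hmA : IsHopfQGMor F QA QX iA)
    (w : H ⊗[F] A) :
    TensorProduct.map (thetaMap F QX iH iA) (thetaMap F QX iH iA)
        (tensorDelta F QH.delta QA.delta w)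
      = QX.delta (thetaMap F QX iH iA w) := by
  induction w using TensorProduct.induction_on with
  | zero => simp
  | tmul h a =>
    have hdm := LinearMap.congr_fun QX.delta_mu (iH h ⊗ₜ[F] iA a)
    simp only [LinearMap.comp_apply, TensorProduct.map_tmul, LinearEquiv.coe_coe] at hdm
    simp only [tensorDelta, LinearMap.comp_apply, TensorProduct.map_tmul,
      LinearEquiv.coe_coe, theta_tmul, hdm, D2b, mor_delta QX QH iH hmH,
      mor_delta QX QA iA hmA]
  | add x y hx hy => simp only [map_add, hx, hy]

lemma Ee1 (hmH : IsHopfQGMor F QH QX iH) (hmA : IsHopfQGMor F QA QX iA)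
    (w : A ⊗[F] H) :
    tensorEps F QA.eps QH.eps w = QX.eps (omegaMap F QX iA iH w) := by
  induction w using TensorProduct.induction_on with
  | zero => simp
  | tmul a h =>
    have hem := LinearMap.congr_fun QX.eps_mu (iA a ⊗ₜ[F] iH h)
    simp only [LinearMap.comp_apply, TensorProduct.map_tmul, LinearEquiv.coe_coe,
      TensorProduct.lid_tmul] at hem
    simp [tensorEps, omega_tmul, hem, mor_eps QX QH iH hmH, mor_eps QX QA iA hmA]
  | add x y hx hy => simp only [map_add, hx, hy]

lemma Ee2 (hmH : IsHopfQGMor F QH QX iH) (hmA : IsHopfQGMor F QA QX iA)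
    (w : H ⊗[F] A) :
    tensorEps F QH.eps QA.eps w = QX.eps (thetaMap F QX iH iA w) := by
  induction w using TensorProduct.induction_on with
  | zero => simp
  | tmul h a =>
    have hem := LinearMap.congr_fun QX.eps_mu (iH h ⊗ₜ[F] iA a)
    simp only [LinearMap.comp_apply, TensorProduct.map_tmul, LinearEquiv.coe_coe,
      TensorProduct.lid_tmul] at hem
    simp [tensorEps, theta_tmul, hem, mor_eps QX QH iH hmH, mor_eps QX QA iA hmA]
  | add x y hx hy => simp only [map_add, hx, hy]

end Aux7
section Aux8

variable {F : Type u} [Field F] {X H A : Type u}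
    [AddCommGroup X] [Module F X] [AddCommGroup H] [Module F H] [AddCommGroup A] [Module F A]
    {QX : HopfQG F X} {QH : HopfQG F H} {QA : HopfQG F A}
    {iH : H →ₗ[F] X} {iA : A →ₗ[F] X} {Ψ : H ⊗[F] A →ₗ[F] A ⊗[F] H}

lemma goal_dl1 (hlamH : Function.Bijective QH.lam) (hlamA : Function.Bijective QA.lam)
    (hfact : Factorizes F QX QH QA iH iA)
    (hmA : IsHopfQGMor F QA QX iA)
    (hψ : ∀ u, omegaMap F QX iA iH (Ψ u) = thetaMap F QX iH iA u) :
    Ψ ∘ₗ lTensor H QA.mu ∘ₗ TensorProduct.map QH.lam (rTensor A QA.lam)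
      = rTensor H QA.mu ∘ₗ (TensorProduct.assoc F A A H).symm.toLinearMap
        ∘ₗ lTensor A Ψ ∘ₗ (TensorProduct.assoc F A H A).toLinearMap
        ∘ₗ rTensor A Ψ ∘ₗ (TensorProduct.assoc F H A A).symm.toLinearMap
        ∘ₗ TensorProduct.map QH.lam (rTensor A QA.lam) := by
  refine TensorProduct.ext' fun h v => ?_
  induction v using TensorProduct.induction_on with
  | zero => simp
  | tmul a a' =>
    refine hfact.1.injective ?_
    simp only [LinearMap.comp_apply, TensorProduct.map_tmul, rTensor_tmul, lTensor_tmul,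
      LinearEquiv.coe_coe, TensorProduct.assoc_symm_tmul]
    conv_lhs => rw [hψ, theta_tmul, mor_mul QX QA iA hmA, TensorProduct.map_tmul]
    conv_rhs => rw [DLB1 hfact hmA hψ, hψ, theta_tmul]
    exact (F4e hlamH hlamA hfact _ _ _).symm
  | add x y hx hy => simp only [TensorProduct.tmul_add, map_add, hx, hy]

lemma goal_dl2 (hlamH : Function.Bijective QH.lam) (hlamA : Function.Bijective QA.lam)
    (hfact : Factorizes F QX QH QA iH iA)
    (hmH : IsHopfQGMor F QH QX iH)
    (hψ : ∀ u, omegaMap F QX iA iH (Ψ u) = thetaMap F QX iH iA u) :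
    Ψ ∘ₗ rTensor A QH.mu ∘ₗ TensorProduct.map (lTensor H QH.lam) QA.lam
      = lTensor A QH.mu ∘ₗ (TensorProduct.assoc F A H H).toLinearMap
        ∘ₗ rTensor H Ψ ∘ₗ (TensorProduct.assoc F H A H).symm.toLinearMap
        ∘ₗ lTensor H Ψ ∘ₗ (TensorProduct.assoc F H H A).toLinearMap
        ∘ₗ TensorProduct.map (lTensor H QH.lam) QA.lam := by
  refine TensorProduct.ext' fun v a => ?_
  induction v using TensorProduct.induction_on with
  | zero => simp
  | tmul h k =>
    refine hfact.1.injective ?_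
    simp only [LinearMap.comp_apply, TensorProduct.map_tmul, rTensor_tmul, lTensor_tmul,
      LinearEquiv.coe_coe, TensorProduct.assoc_tmul]
    conv_lhs => rw [hψ, theta_tmul, mor_mul QX QH iH hmH, TensorProduct.map_tmul]
    conv_rhs => rw [DLB2 hfact hmH hψ, hψ, theta_tmul]
    exact (F5e hlamH hlamA hfact _ _ _).symm
  | add x y hx hy => simp only [TensorProduct.add_tmul, map_add, hx, hy]

lemma goal_dl3 (hfact : Factorizes F QX QH QA iH iA)
    (hmH : IsHopfQGMor F QH QX iH) (hmA : IsHopfQGMor F QA QX iA)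
    (hψ : ∀ u, omegaMap F QX iA iH (Ψ u) = thetaMap F QX iH iA u) :
    Ψ ∘ₗ lTensor H QA.eta ∘ₗ (TensorProduct.rid F H).symm.toLinearMap
      = rTensor H QA.eta ∘ₗ (TensorProduct.lid F H).symm.toLinearMap := by
  refine LinearMap.ext fun h => hfact.1.injective ?_
  simp only [LinearMap.comp_apply, LinearEquiv.coe_coe, TensorProduct.rid_symm_apply,
    TensorProduct.lid_symm_apply, lTensor_tmul, rTensor_tmul]
  rw [hψ, theta_tmul, mor_eta QX QA iA hmA, QX.mul_one', omega_tmul,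
    mor_eta QX QA iA hmA, QX.one_mul']

lemma goal_dl4 (hfact : Factorizes F QX QH QA iH iA)
    (hmH : IsHopfQGMor F QH QX iH) (hmA : IsHopfQGMor F QA QX iA)
    (hψ : ∀ u, omegaMap F QX iA iH (Ψ u) = thetaMap F QX iH iA u) :
    Ψ ∘ₗ rTensor A QH.eta ∘ₗ (TensorProduct.lid F A).symm.toLinearMap
      = lTensor A QH.eta ∘ₗ (TensorProduct.rid F A).symm.toLinearMap := by
  refine LinearMap.ext fun a => hfact.1.injective ?_
  simp only [LinearMap.comp_apply, LinearEquiv.coe_coe, TensorProduct.rid_symm_apply,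
    TensorProduct.lid_symm_apply, lTensor_tmul, rTensor_tmul]
  rw [hψ, theta_tmul, mor_eta QX QH iH hmH, QX.one_mul', omega_tmul,
    mor_eta QX QH iH hmH, QX.mul_one']

lemma goal_dc (hfact : Factorizes F QX QH QA iH iA)
    (hmH : IsHopfQGMor F QH QX iH) (hmA : IsHopfQGMor F QA QX iA)
    (hψ : ∀ u, omegaMap F QX iA iH (Ψ u) = thetaMap F QX iH iA u) :
    tensorDelta F QA.delta QH.delta ∘ₗ Ψ
      = TensorProduct.map Ψ Ψ ∘ₗ tensorDelta F QH.delta QA.delta := by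
  set ω := omegaMap F QX iA iH with hw
  have hinj2 : Function.Injective (TensorProduct.map ω ω) := by
    have he : TensorProduct.map ω ω
        = (TensorProduct.congr (LinearEquiv.ofBijective ω hfact.1)
            (LinearEquiv.ofBijective ω hfact.1)).toLinearMap := by
      refine TensorProduct.ext' fun w w' => ?_
      simp [TensorProduct.congr_tmul]
    rw [he]
    exact (TensorProduct.congr _ _).injective
  refine LinearMap.ext fun u => hinj2 ?_
  have key : ∀ v : (H ⊗[F] A) ⊗[F] (H ⊗[F] A),
      TensorProduct.map ω ω (TensorProduct.map Ψ Ψ v)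
        = TensorProduct.map (thetaMap F QX iH iA) (thetaMap F QX iH iA) v := by
    intro v
    induction v using TensorProduct.induction_on with
    | zero => simp
    | tmul u1 u2 => simp [hψ]
    | add x y hx hy => simp only [map_add, hx, hy]
  simp only [LinearMap.comp_apply]
  rw [D1e hmH hmA, hψ, ← D2e hmH hmA, key]

lemma goal_de (hfact : Factorizes F QX QH QA iH iA)
    (hmH : IsHopfQGMor F QH QX iH) (hmA : IsHopfQGMor F QA QX iA)
    (hψ : ∀ u, omegaMap F QX iA iH (Ψ u) = thetaMap F QX iH iA u) :
    tensorEps F QA.eps QH.eps ∘ₗ Ψ = tensorEps F QH.eps QA.eps := by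
  refine LinearMap.ext fun u => ?_
  simp only [LinearMap.comp_apply]
  rw [Ee1 hmH hmA, hψ, ← Ee2 hmH hmA]

lemma goal_a1 (hlamH : Function.Bijective QH.lam) (hlamA : Function.Bijective QA.lam)
    (hfact : Factorizes F QX QH QA iH iA)
    (hmH : IsHopfQGMor F QH QX iH)
    (hψ : ∀ u, omegaMap F QX iA iH (Ψ u) = thetaMap F QX iH iA u) :
    lTensor A QH.mu ∘ₗ (TensorProduct.assoc F A H H).toLinearMap
        ∘ₗ TensorProduct.map Ψ QH.mu
        ∘ₗ (TensorProduct.assoc F H A (H ⊗[F] H)).symm.toLinearMap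
        ∘ₗ lTensor H (TensorProduct.assoc F A H H).toLinearMap
        ∘ₗ lTensor H (rTensor H Ψ)
        ∘ₗ lTensor H (TensorProduct.assoc F H A H).symm.toLinearMap
        ∘ₗ (TensorProduct.assoc F H H (A ⊗[F] H)).toLinearMap
        ∘ₗ rTensor (A ⊗[F] H) (rTensor H QH.lam ∘ₗ QH.delta)
      = (TensorProduct.lid F (A ⊗[F] H)).toLinearMap ∘ₗ rTensor (A ⊗[F] H) QH.eps := by
  refine TensorProduct.ext' fun h w => ?_
  induction w using TensorProduct.induction_on with
  | zero => simp
  | tmul a k =>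
    refine hfact.1.injective ?_
    simp only [LinearMap.comp_apply, LinearEquiv.coe_coe, rTensor_tmul,
      TensorProduct.lid_tmul]
    rw [B1 hlamH hlamA hfact hmH hψ, XL1f hmH, map_smul]
  | add x y hx hy => simp only [TensorProduct.tmul_add, map_add, hx, hy]

lemma goal_a2 (hlamH : Function.Bijective QH.lam) (hlamA : Function.Bijective QA.lam)
    (hfact : Factorizes F QX QH QA iH iA)
    (hmH : IsHopfQGMor F QH QX iH)
    (hψ : ∀ u, omegaMap F QX iA iH (Ψ u) = thetaMap F QX iH iA u) :
    lTensor A QH.mu ∘ₗ (TensorProduct.assoc F A H H).toLinearMap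
        ∘ₗ TensorProduct.map Ψ QH.mu
        ∘ₗ (TensorProduct.assoc F H A (H ⊗[F] H)).symm.toLinearMap
        ∘ₗ lTensor H (TensorProduct.assoc F A H H).toLinearMap
        ∘ₗ lTensor H (rTensor H Ψ)
        ∘ₗ lTensor H (TensorProduct.assoc F H A H).symm.toLinearMap
        ∘ₗ (TensorProduct.assoc F H H (A ⊗[F] H)).toLinearMap
        ∘ₗ rTensor (A ⊗[F] H) (lTensor H QH.lam ∘ₗ QH.delta)
      = (TensorProduct.lid F (A ⊗[F] H)).toLinearMap ∘ₗ rTensor (A ⊗[F] H) QH.eps := by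
  refine TensorProduct.ext' fun h w => ?_
  induction w using TensorProduct.induction_on with
  | zero => simp
  | tmul a k =>
    refine hfact.1.injective ?_
    simp only [LinearMap.comp_apply, LinearEquiv.coe_coe, rTensor_tmul,
      TensorProduct.lid_tmul]
    rw [B1 hlamH hlamA hfact hmH hψ, XL2f hmH, map_smul]
  | add x y hx hy => simp only [TensorProduct.tmul_add, map_add, hx, hy]

lemma goal_a3 (hlamH : Function.Bijective QH.lam) (hlamA : Function.Bijective QA.lam)
    (hfact : Factorizes F QX QH QA iH iA)
    (hmA : IsHopfQGMor F QA QX iA)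
    (hψ : ∀ u, omegaMap F QX iA iH (Ψ u) = thetaMap F QX iH iA u) :
    rTensor H QA.mu ∘ₗ (TensorProduct.assoc F A A H).symm.toLinearMap
        ∘ₗ TensorProduct.map QA.mu Ψ
        ∘ₗ (TensorProduct.assoc F A A (H ⊗[F] A)).symm.toLinearMap
        ∘ₗ lTensor A (TensorProduct.assoc F A H A).toLinearMap
        ∘ₗ lTensor A (rTensor A Ψ)
        ∘ₗ lTensor A (TensorProduct.assoc F H A A).symm.toLinearMap
        ∘ₗ (TensorProduct.assoc F A H (A ⊗[F] A)).toLinearMap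
        ∘ₗ lTensor (A ⊗[F] H) (rTensor A QA.lam ∘ₗ QA.delta)
      = (TensorProduct.rid F (A ⊗[F] H)).toLinearMap ∘ₗ lTensor (A ⊗[F] H) QA.eps := by
  refine TensorProduct.ext' fun w c => ?_
  induction w using TensorProduct.induction_on with
  | zero => simp
  | tmul a h =>
    refine hfact.1.injective ?_
    simp only [LinearMap.comp_apply, LinearEquiv.coe_coe, lTensor_tmul,
      TensorProduct.rid_tmul]
    rw [B3 hlamH hlamA hfact hmA hψ, XR1f hmA, map_smul]
  | add x y hx hy => simp only [TensorProduct.add_tmul, map_add, hx, hy]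

lemma goal_a4 (hlamH : Function.Bijective QH.lam) (hlamA : Function.Bijective QA.lam)
    (hfact : Factorizes F QX QH QA iH iA)
    (hmA : IsHopfQGMor F QA QX iA)
    (hψ : ∀ u, omegaMap F QX iA iH (Ψ u) = thetaMap F QX iH iA u) :
    rTensor H QA.mu ∘ₗ (TensorProduct.assoc F A A H).symm.toLinearMap
        ∘ₗ TensorProduct.map QA.mu Ψ
        ∘ₗ (TensorProduct.assoc F A A (H ⊗[F] A)).symm.toLinearMap
        ∘ₗ lTensor A (TensorProduct.assoc F A H A).toLinearMap
        ∘ₗ lTensor A (rTensor A Ψ)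
        ∘ₗ lTensor A (TensorProduct.assoc F H A A).symm.toLinearMap
        ∘ₗ (TensorProduct.assoc F A H (A ⊗[F] A)).toLinearMap
        ∘ₗ lTensor (A ⊗[F] H) (lTensor A QA.lam ∘ₗ QA.delta)
      = (TensorProduct.rid F (A ⊗[F] H)).toLinearMap ∘ₗ lTensor (A ⊗[F] H) QA.eps := by
  refine TensorProduct.ext' fun w c => ?_
  induction w using TensorProduct.induction_on with
  | zero => simp
  | tmul a h =>
    refine hfact.1.injective ?_
    simp only [LinearMap.comp_apply, LinearEquiv.coe_coe, lTensor_tmul,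
      TensorProduct.rid_tmul]
    rw [B3 hlamH hlamA hfact hmA hψ, XR2f hmA, map_smul]
  | add x y hx hy => simp only [TensorProduct.add_tmul, map_add, hx, hy]

end Aux8
/-- if, moreover, the antipodes of `H` and `A` are bijective, then
`Ψ = ω_X⁻¹∘θ_X` is an a-comonoidal distributive law of `H` over `A`. -/
theorem stmt2_factorization_gives_a_comonoidal_distributive_law
    {F : Type u} [Field F] {X H A : Type u}
    [AddCommGroup X] [Module F X] [AddCommGroup H] [Module F H] [AddCommGroup A] [Module F A]
    (QX : HopfQG F X) (QH : HopfQG F H) (QA : HopfQG F A)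
    (hlamH : Function.Bijective QH.lam) (hlamA : Function.Bijective QA.lam)
    (iH : H →ₗ[F] X) (iA : A →ₗ[F] X)
    (hiH : Function.Injective iH) (hiA : Function.Injective iA)
    (hmH : IsHopfQGMor F QH QX iH) (hmA : IsHopfQGMor F QA QX iA)
    (hfact : Factorizes F QX QH QA iH iA) :
    IsAComonoidalDL F QH QA
      ((LinearEquiv.ofBijective (omegaMap F QX iA iH) hfact.1).symm.toLinearMap
        ∘ₗ thetaMap F QX iH iA) := by
  have hψ := omega_psi hfact
  exact ⟨⟨⟨goal_dl1 hlamH hlamA hfact hmA hψ, goal_dl2 hlamH hlamA hfact hmH hψ,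
      goal_dl3 hfact hmH hmA hψ, goal_dl4 hfact hmH hmA hψ⟩,
      goal_dc hfact hmH hmA hψ, goal_de hfact hmH hmA hψ⟩,
    goal_a1 hlamH hlamA hfact hmH hψ, goal_a2 hlamH hlamA hfact hmH hψ,
    goal_a3 hlamH hlamA hfact hmA hψ, goal_a4 hlamH hlamA hfact hmA hψ⟩
end
end

section
/- Let X be a Hopf quasigroup over a field F and let H, A be Hopf quasigroups whose antipodes λ_H and λ_A are bijective, equipped with injective Hopf quasigroup morphisms i_H : H → X and i_A : A → X such that X factorizes as X = AH. Let Ψ = ω_X⁻¹∘θ_X, which is an a-comonoidal distributive law of H over A. Then ω_X is an isomorphism of Hopf quasigroups from the wreath product A⊗_Ψ H to X, i.e. ω_X is bijective and preserves unit, product, counit and coproduct of the wreath product structure. -/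
open TensorProduct LinearMap

noncomputable section

universe u

/-- `ω_X` is an isomorphism of Hopf quasigroups from the wreath product
`A ⊗_Ψ H` (with `Ψ = ω_X⁻¹∘θ_X`) to `X`. -/
theorem stmt3_omega_is_isomorphism_from_wreath_product
    {F : Type u} [Field F] {X H A : Type u}
    [AddCommGroup X] [Module F X] [AddCommGroup H] [Module F H] [AddCommGroup A] [Module F A]
    (QX : HopfQG F X) (QH : HopfQG F H) (QA : HopfQG F A)
    (hlamH : Function.Bijective QH.lam) (hlamA : Function.Bijective QA.lam)
    (iH : H →ₗ[F] X) (iA : A →ₗ[F] X)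
    (hiH : Function.Injective iH) (hiA : Function.Injective iA)
    (hmH : IsHopfQGMor F QH QX iH) (hmA : IsHopfQGMor F QA QX iA)
    (hfact : Factorizes F QX QH QA iH iA) :
    ∀ Ψ : H ⊗[F] A →ₗ[F] A ⊗[F] H,
      Ψ = (LinearEquiv.ofBijective (omegaMap F QX iA iH) hfact.1).symm.toLinearMap
        ∘ₗ thetaMap F QX iH iA →
      Function.Bijective (omegaMap F QX iA iH)
      ∧ omegaMap F QX iA iH ∘ₗ tensorEta F QA.eta QH.eta = QX.eta
      ∧ omegaMap F QX iA iH ∘ₗ wreathMul F QA QH Ψ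
          = QX.mu ∘ₗ TensorProduct.map (omegaMap F QX iA iH) (omegaMap F QX iA iH)
      ∧ QX.eps ∘ₗ omegaMap F QX iA iH = tensorEps F QA.eps QH.eps
      ∧ TensorProduct.map (omegaMap F QX iA iH) (omegaMap F QX iA iH) ∘ₗ tensorDelta F QA.delta QH.delta
          = QX.delta ∘ₗ omegaMap F QX iA iH := by
  intro Ψ hΨ
  -- ω ∘ Ψ = θ at elements
  have hωΨ : ∀ (h : H) (a : A),
      omegaMap F QX iA iH (Ψ (h ⊗ₜ[F] a)) = QX.mu (iH h ⊗ₜ[F] iA a) := by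
    intro h a
    rw [hΨ]
    simp only [LinearMap.comp_apply, LinearEquiv.coe_coe]
    have h1 : omegaMap F QX iA iH
        ((LinearEquiv.ofBijective (omegaMap F QX iA iH) hfact.1).symm
          (thetaMap F QX iH iA (h ⊗ₜ[F] a)))
        = thetaMap F QX iH iA (h ⊗ₜ[F] a) :=
      (LinearEquiv.ofBijective (omegaMap F QX iA iH) hfact.1).apply_symm_apply _
    rw [h1]
    simp [thetaMap]
  have fact1 : ∀ (a : A) (h : H) (x : X),
      QX.mu (QX.mu (iA a ⊗ₜ[F] iH h) ⊗ₜ[F] x)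
        = QX.mu (iA a ⊗ₜ[F] QX.mu (iH h ⊗ₜ[F] x)) := by
    intro a h x
    have := LinearMap.congr_fun hfact.2.1 ((a ⊗ₜ[F] h) ⊗ₜ[F] x)
    simpa [omegaMap] using this
  have fact2 : ∀ (x : X) (a : A) (h : H),
      QX.mu (x ⊗ₜ[F] QX.mu (iA a ⊗ₜ[F] iH h))
        = QX.mu (QX.mu (x ⊗ₜ[F] iA a) ⊗ₜ[F] iH h) := by
    intro x a h
    have := LinearMap.congr_fun hfact.2.2.1 (x ⊗ₜ[F] (a ⊗ₜ[F] h))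
    simpa [omegaMap] using this
  have muH : ∀ (k h' : H), iH (QH.mu (k ⊗ₜ[F] h')) = QX.mu (iH k ⊗ₜ[F] iH h') := by
    intro k h'
    have := LinearMap.congr_fun hmH.2.1 (k ⊗ₜ[F] h')
    simpa using this
  have muA : ∀ (a b : A), iA (QA.mu (a ⊗ₜ[F] b)) = QX.mu (iA a ⊗ₜ[F] iA b) := by
    intro a b
    have := LinearMap.congr_fun hmA.2.1 (a ⊗ₜ[F] b)
    simpa using this
  have key : ∀ (a : A) (t : A ⊗[F] H) (h' : H),
      omegaMap F QX iA iH ((TensorProduct.map QA.mu QH.mu)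
          ((TensorProduct.assoc F A A (H ⊗[F] H)).symm
            (a ⊗ₜ[F] ((TensorProduct.assoc F A H H) (t ⊗ₜ[F] h')))))
        = QX.mu (iA a ⊗ₜ[F] QX.mu (omegaMap F QX iA iH t ⊗ₜ[F] iH h')) := by
    intro a t h'
    induction t using TensorProduct.induction_on with
    | zero => simp [omegaMap]
    | tmul b k =>
        simp only [TensorProduct.assoc_tmul, TensorProduct.assoc_symm_tmul,
          TensorProduct.map_tmul, omegaMap, LinearMap.comp_apply]
        rw [fact1 b k (iH h'), ← muH k h', fact2 (iA a) b (QH.mu (k ⊗ₜ[F] h')),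
          ← muA a b]
    | add t1 t2 ih1 ih2 =>
        simp only [add_tmul, tmul_add, map_add] at ih1 ih2 ⊢
        rw [ih1, ih2]
  have key5 : ∀ (u : A ⊗[F] A) (v : H ⊗[F] H),
      TensorProduct.map (omegaMap F QX iA iH) (omegaMap F QX iA iH)
          ((TensorProduct.tensorTensorTensorComm F A A H H) (u ⊗ₜ[F] v))
        = TensorProduct.map QX.mu QX.mu ((TensorProduct.tensorTensorTensorComm F X X X X)
            ((TensorProduct.map iA iA u) ⊗ₜ[F] (TensorProduct.map iH iH v))) := by
    intro u v
    induction u using TensorProduct.induction_on with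
    | zero => simp
    | tmul a1 a2 =>
        induction v using TensorProduct.induction_on with
        | zero => simp
        | tmul h1 h2 =>
            simp [TensorProduct.tensorTensorTensorComm_tmul, omegaMap]
        | add v1 v2 ih1 ih2 =>
            simp only [tmul_add, map_add] at ih1 ih2 ⊢
            rw [ih1, ih2]
    | add u1 u2 ih1 ih2 =>
        simp only [add_tmul, map_add] at ih1 ih2 ⊢
        rw [ih1, ih2]
  refine ⟨hfact.1, ?_, ?_, ?_, ?_⟩
  · -- unit
    apply LinearMap.ext_ring
    have h2 : iA (QA.eta 1) = QX.eta 1 := LinearMap.congr_fun hmA.1 1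
    have h3 : iH (QH.eta 1) = QX.eta 1 := LinearMap.congr_fun hmH.1 1
    have h4 := LinearMap.congr_fun QX.mul_one (QX.eta 1)
    simp only [LinearMap.comp_apply, LinearEquiv.coe_coe, TensorProduct.rid_symm_apply,
      LinearMap.lTensor_tmul, LinearMap.id_coe, id_eq] at h4
    simp only [LinearMap.comp_apply, tensorEta, omegaMap, LinearEquiv.coe_coe,
      TensorProduct.lid_symm_apply, TensorProduct.map_tmul, h2, h3]
    exact h4
  · -- multiplication
    apply TensorProduct.ext_fourfold'
    intro a h a' h'
    have lhs1 : (omegaMap F QX iA iH ∘ₗ wreathMul F QA QH Ψ) ((a ⊗ₜ[F] h) ⊗ₜ[F] (a' ⊗ₜ[F] h'))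
        = omegaMap F QX iA iH ((TensorProduct.map QA.mu QH.mu)
            ((TensorProduct.assoc F A A (H ⊗[F] H)).symm
              (a ⊗ₜ[F] ((TensorProduct.assoc F A H H) (Ψ (h ⊗ₜ[F] a') ⊗ₜ[F] h'))))) := by
      simp only [wreathMul, LinearMap.comp_apply, LinearEquiv.coe_coe,
        TensorProduct.assoc_tmul, LinearMap.lTensor_tmul, TensorProduct.assoc_symm_tmul,
        LinearMap.rTensor_tmul]
    rw [lhs1, key a (Ψ (h ⊗ₜ[F] a')) h', hωΨ h a']
    have rhs1 : (QX.mu ∘ₗ TensorProduct.map (omegaMap F QX iA iH) (omegaMap F QX iA iH))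
          ((a ⊗ₜ[F] h) ⊗ₜ[F] (a' ⊗ₜ[F] h'))
        = QX.mu (QX.mu (iA a ⊗ₜ[F] iH h) ⊗ₜ[F] QX.mu (iA a' ⊗ₜ[F] iH h')) := by
      simp [omegaMap]
    rw [rhs1, fact1 a h (QX.mu (iA a' ⊗ₜ[F] iH h')), fact2 (iH h) a' h']
  · -- counit
    apply TensorProduct.ext'
    intro a h
    have h5 := LinearMap.congr_fun QX.eps_mu (iA a ⊗ₜ[F] iH h)
    have ha : QX.eps (iA a) = QA.eps a := LinearMap.congr_fun hmA.2.2.1 a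
    have hh : QX.eps (iH h) = QH.eps h := LinearMap.congr_fun hmH.2.2.1 h
    simp only [LinearMap.comp_apply, LinearEquiv.coe_coe, TensorProduct.map_tmul,
      TensorProduct.lid_tmul] at h5
    simp only [LinearMap.comp_apply, omegaMap, tensorEps, LinearEquiv.coe_coe,
      TensorProduct.map_tmul, TensorProduct.lid_tmul, h5, ha, hh]
  · -- comultiplication
    apply TensorProduct.ext'
    intro a h
    have h6 := LinearMap.congr_fun QX.delta_mu (iA a ⊗ₜ[F] iH h)
    have ha : TensorProduct.map iA iA (QA.delta a) = QX.delta (iA a) :=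
      LinearMap.congr_fun hmA.2.2.2 a
    have hh : TensorProduct.map iH iH (QH.delta h) = QX.delta (iH h) :=
      LinearMap.congr_fun hmH.2.2.2 h
    simp only [LinearMap.comp_apply, LinearEquiv.coe_coe, TensorProduct.map_tmul] at h6
    simp only [LinearMap.comp_apply, tensorDelta, omegaMap, LinearEquiv.coe_coe,
      TensorProduct.map_tmul, h6, ← ha, ← hh]
    exact key5 (QA.delta a) (QH.delta h)
end
end
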